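/- arXiv:2605.07979 — 10 statements merged into one kernel-verified Lean document; each statement's English description precedes it below -/
import Mathlib

section
/- Let μ(X) have a continuous strictly increasing CDF F with density f > 0 on [0,1], and let α ∈ (0,β), β ∈ (0,1) with α+β < 1. Define the map h(q_b) = ∫_{q_a(q_b)}^{q_b} μ dF(μ) + 1 − F(q_b), where q_a(q_b) = F^{-1}(F(q_b) − α). Then h is strictly decreasing in q_b on the set where F(q_b) ≥ α, so the equation h(q_b) = β has at most one solution. -/
open intervalIntegral

/-- Strict monotonicity of the budget map `h(q_b) = ∫_{q_a(q_b)}^{q_b} μ dF + 1 - F(q_b)`,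
where `q_a(q_b) = F⁻¹(F(q_b) - α)`: `h` is strictly decreasing on `{q ∈ [0,1] : F(q) ≥ α}`,
hence `h(q_b) = β` has at most one solution there. -/
theorem budget_map_strict_anti
    (F Finv f : ℝ → ℝ) (α β : ℝ)
    (hα : 0 < α) (hαβ : α < β) (hβ : β < 1) (hsum : α + β < 1)
    (hF0 : F 0 = 0) (hF1 : F 1 = 1)
    (hFderiv : ∀ x ∈ Set.Icc (0:ℝ) 1, HasDerivAt F (f x) x)
    (hfpos : ∀ x ∈ Set.Icc (0:ℝ) 1, 0 < f x)
    (hFmono : StrictMonoOn F (Set.Icc (0:ℝ) 1))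
    (hFinv : ∀ p ∈ Set.Icc (0:ℝ) 1, F (Finv p) = p ∧ Finv p ∈ Set.Icc (0:ℝ) 1) :
    StrictAntiOn (fun q => (∫ μ in (Finv (F q - α))..q, μ * f μ) + 1 - F q)
      {q | q ∈ Set.Icc (0:ℝ) 1 ∧ α ≤ F q} ∧
    ∀ q₁ ∈ {q | q ∈ Set.Icc (0:ℝ) 1 ∧ α ≤ F q},
      ∀ q₂ ∈ {q | q ∈ Set.Icc (0:ℝ) 1 ∧ α ≤ F q},
        ((∫ μ in (Finv (F q₁ - α))..q₁, μ * f μ) + 1 - F q₁ = β) →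
        ((∫ μ in (Finv (F q₂ - α))..q₂, μ * f μ) + 1 - F q₂ = β) → q₁ = q₂ := by
  -- integrability of f on [0,1]
  have hcont : ContinuousOn F (Set.Icc (0:ℝ) 1) := fun x hx =>
    (hFderiv x hx).continuousAt.continuousWithinAt
  have hI01 : MeasureTheory.IntegrableOn f (Set.Icc (0:ℝ) 1) := by
    rw [integrableOn_Icc_iff_integrableOn_Ioc]
    exact intervalIntegral.integrableOn_deriv_of_nonneg hcont
      (fun x hx => hFderiv x (Set.Ioo_subset_Icc_self hx))
      (fun x hx => (hfpos x (Set.Ioo_subset_Icc_self hx)).le)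
  have hIg : MeasureTheory.IntegrableOn (fun x => x * f x) (Set.Icc (0:ℝ) 1) := by
    refine MeasureTheory.Integrable.mono' hI01.norm
      (aestronglyMeasurable_id.mul hI01.aestronglyMeasurable) ?_
    filter_upwards [MeasureTheory.ae_restrict_mem measurableSet_Icc] with x hx
    have hx0 : |x| ≤ 1 := abs_le.2 ⟨by linarith [hx.1], hx.2⟩
    calc ‖x * f x‖ = |x| * |f x| := abs_mul _ _
      _ ≤ 1 * |f x| := by
          exact mul_le_mul_of_nonneg_right hx0 (abs_nonneg _)
      _ = ‖f x‖ := by rw [one_mul]; rfl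
  have hgInt : ∀ u ∈ Set.Icc (0:ℝ) 1, ∀ v ∈ Set.Icc (0:ℝ) 1,
      IntervalIntegrable (fun x => x * f x) MeasureTheory.volume u v := by
    intro u hu v hv
    exact (hIg.mono_set (Set.uIcc_subset_Icc hu hv)).intervalIntegrable
  have hfInt : ∀ u ∈ Set.Icc (0:ℝ) 1, ∀ v ∈ Set.Icc (0:ℝ) 1,
      IntervalIntegrable f MeasureTheory.volume u v := by
    intro u hu v hv
    exact (hI01.mono_set (Set.uIcc_subset_Icc hu hv)).intervalIntegrable
  have key : StrictAntiOn (fun q => (∫ μ in (Finv (F q - α))..q, μ * f μ) + 1 - F q)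
      {q | q ∈ Set.Icc (0:ℝ) 1 ∧ α ≤ F q} := by
    rintro q₁ ⟨hq₁, hαq₁⟩ q₂ ⟨hq₂, hαq₂⟩ hlt
    set a₁ := Finv (F q₁ - α) with ha₁def
    set a₂ := Finv (F q₂ - α) with ha₂def
    have hFq₁le : F q₁ ≤ 1 := by
      rcases eq_or_lt_of_le hq₁.2 with h | h
      · rw [h, hF1]
      · exact le_of_lt (hF1 ▸ hFmono hq₁ (by norm_num) h)
    have hFq₂le : F q₂ ≤ 1 := by
      rcases eq_or_lt_of_le hq₂.2 with h | h
      · rw [h, hF1]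
      · exact le_of_lt (hF1 ▸ hFmono hq₂ (by norm_num) h)
    have hp₁ : F q₁ - α ∈ Set.Icc (0:ℝ) 1 := ⟨by linarith, by linarith⟩
    have hp₂ : F q₂ - α ∈ Set.Icc (0:ℝ) 1 := ⟨by linarith, by linarith⟩
    obtain ⟨hFa₁, ha₁⟩ := hFinv _ hp₁
    obtain ⟨hFa₂, ha₂⟩ := hFinv _ hp₂
    have hFq : F q₁ < F q₂ := hFmono hq₁ hq₂ hlt
    have ha₁₂ : a₁ < a₂ := by
      rw [← hFmono.lt_iff_lt ha₁ ha₂, hFa₁, hFa₂]; linarith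
    -- FTC: ∫_{q₁}^{q₂} f = F q₂ - F q₁
    have hFTC : (∫ x in q₁..q₂, f x) = F q₂ - F q₁ := by
      refine intervalIntegral.integral_eq_sub_of_hasDerivAt
        (fun x hx => hFderiv x (Set.uIcc_subset_Icc hq₁ hq₂ hx)) (hfInt _ hq₁ _ hq₂)
    -- splitting
    have hsplit1 : (∫ x in a₁..q₁, x * f x) + (∫ x in q₁..q₂, x * f x)
        = ∫ x in a₁..q₂, x * f x :=
      intervalIntegral.integral_add_adjacent_intervals (hgInt _ ha₁ _ hq₁) (hgInt _ hq₁ _ hq₂)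
    have hsplit2 : (∫ x in a₁..a₂, x * f x) + (∫ x in a₂..q₂, x * f x)
        = ∫ x in a₁..q₂, x * f x :=
      intervalIntegral.integral_add_adjacent_intervals (hgInt _ ha₁ _ ha₂) (hgInt _ ha₂ _ hq₂)
    -- upper bound on middle piece
    have hmono : (∫ x in q₁..q₂, x * f x) ≤ ∫ x in q₁..q₂, f x := by
      refine intervalIntegral.integral_mono_on hlt.le (hgInt _ hq₁ _ hq₂) (hfInt _ hq₁ _ hq₂) ?_
      intro x hx
      have hx01 : x ∈ Set.Icc (0:ℝ) 1 := ⟨le_trans hq₁.1 hx.1, le_trans hx.2 hq₂.2⟩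
      exact mul_le_of_le_one_left (hfpos x hx01).le hx01.2
    -- positivity of lower piece
    have hpos : 0 < ∫ x in a₁..a₂, x * f x := by
      refine intervalIntegral.intervalIntegral_pos_of_pos_on (hgInt _ ha₁ _ ha₂) ?_ ha₁₂
      intro x hx
      have hx0 : 0 < x := lt_of_le_of_lt ha₁.1 hx.1
      have hx01 : x ∈ Set.Icc (0:ℝ) 1 := ⟨hx0.le, le_trans hx.2.le ha₂.2⟩
      exact mul_pos hx0 (hfpos x hx01)
    simp only
    linarith
  refine ⟨key, ?_⟩
  intro q₁ hq₁ q₂ hq₂ hb₁ hb₂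
  exact key.injOn hq₁ hq₂ (by rw [hb₁, hb₂])
end

section
/- For μ ~ Uniform[0,1] with thresholds q_β(α) = (1−β−α²/2)/(1−α) and q_α(α) = q_β(α) − α, the map α ↦ q_β(α) is strictly increasing and the map α ↦ q_α(α) is strictly decreasing on (0, β), provided β ∈ (0,1) and α+β < 1. -/
/-- For uniform risk, the optimal upper threshold `q_β(α) = (1-β-α²/2)/(1-α)` is
strictly increasing and the lower threshold `q_α(α) = q_β(α) - α` is strictly
decreasing in the screening budget `α`, on `{α : 0 < α < β, α + β < 1}`. -/
theorem uniform_thresholds_monotone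
    (β : ℝ) (hβ0 : 0 < β) (hβ1 : β < 1) :
    StrictMonoOn (fun a : ℝ => (1 - β - a ^ 2 / 2) / (1 - a))
      {a : ℝ | 0 < a ∧ a < β ∧ a + β < 1} ∧
    StrictAntiOn (fun a : ℝ => (1 - β - a ^ 2 / 2) / (1 - a) - a)
      {a : ℝ | 0 < a ∧ a < β ∧ a + β < 1} := by
  constructor
  · intro a ha b hb hab
    obtain ⟨ha0, haβ, haβ1⟩ := ha
    obtain ⟨hb0, hbβ, hbβ1⟩ := hb
    have h1a : (0:ℝ) < 1 - a := by linarith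
    have h1b : (0:ℝ) < 1 - b := by linarith
    simp only
    rw [div_lt_div_iff₀ h1a h1b]
    nlinarith [mul_pos ha0 hb0, mul_pos (sub_pos.mpr hab) (mul_pos ha0 hb0)]
  · intro a ha b hb hab
    obtain ⟨ha0, haβ, haβ1⟩ := ha
    obtain ⟨hb0, hbβ, hbβ1⟩ := hb
    have h1a : (0:ℝ) < 1 - a := by linarith
    have h1b : (0:ℝ) < 1 - b := by linarith
    simp only
    rw [sub_lt_sub_iff, div_add' _ _ _ (ne_of_gt h1b), div_add' _ _ _ (ne_of_gt h1a),
      div_lt_div_iff₀ h1b h1a]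
    nlinarith [mul_pos ha0 hb0, mul_pos (sub_pos.mpr hab) (mul_pos ha0 hb0)]
end

section
/- Let q_α, q_β be differentiable functions of α with 0 < q_α(α) ≤ q_β(α) < 1 satisfying the implicit budget constraints F(q_β) − F(q_α) = α and ∫_{q_α}^{q_β} μ f(μ)dμ + 1 − F(q_β) = β, where F is a C¹ CDF with density f > 0. Then dq_β/dα = q_α / (f(q_β)(1 − q_β + q_α)) > 0 and dq_α/dα = (q_β − 1)/(f(q_α)(1 − q_β + q_α)) < 0. -/
/-- Implicit derivatives of the optimal screening thresholds: if `q_α(α), q_β(α)` are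
differentiable and satisfy the budget constraints `F(q_β) - F(q_α) = α` and
`∫_{q_α}^{q_β} μ f(μ) dμ + 1 - F(q_β) = β` with `0 < q_α ≤ q_β < 1`, `F` a C¹ CDF
with density `f > 0`, then `q_β' = q_α/(f(q_β)(1 - q_β + q_α)) > 0` and
`q_α' = (q_β - 1)/(f(q_α)(1 - q_β + q_α)) < 0`. -/
theorem threshold_derivatives
    (F f : ℝ → ℝ) (β : ℝ) (qa qb : ℝ → ℝ) (s : Set ℝ) (hs : IsOpen s)
    (hFderiv : ∀ x ∈ Set.Icc (0:ℝ) 1, HasDerivAt F (f x) x)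
    (hfcont : ContinuousOn f (Set.Icc (0:ℝ) 1))
    (hfpos : ∀ x ∈ Set.Icc (0:ℝ) 1, 0 < f x)
    (hF0 : F 0 = 0) (hF1 : F 1 = 1)
    (hq : ∀ a ∈ s, 0 < qa a ∧ qa a ≤ qb a ∧ qb a < 1)
    (hc1 : ∀ a ∈ s, F (qb a) - F (qa a) = a)
    (hc2 : ∀ a ∈ s, (∫ μ in (qa a)..(qb a), μ * f μ) + 1 - F (qb a) = β)
    (hqa : DifferentiableOn ℝ qa s) (hqb : DifferentiableOn ℝ qb s) :
    ∀ a ∈ s,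
      deriv qb a = qa a / (f (qb a) * (1 - qb a + qa a)) ∧ 0 < deriv qb a ∧
      deriv qa a = (qb a - 1) / (f (qa a) * (1 - qb a + qa a)) ∧ deriv qa a < 0 := by
  -- F is continuous on [0,1]
  have hFcont : ContinuousOn F (Set.Icc (0:ℝ) 1) := fun y hy =>
    ((hFderiv y hy).continuousAt).continuousWithinAt
  have hFcontIoo : ContinuousOn F (Set.Ioo (0:ℝ) 1) := hFcont.mono Set.Ioo_subset_Icc_self
  -- antiderivative of μ ↦ μ f μ
  set H : ℝ → ℝ := fun y => y * F y - ∫ t in (0:ℝ)..y, F t with hHdef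
  have hH : ∀ x ∈ Set.Ioo (0:ℝ) 1, HasDerivAt H (x * f x) x := by
    intro x hx
    have hx' : x ∈ Set.Icc (0:ℝ) 1 := Set.Ioo_subset_Icc_self hx
    have h1 : HasDerivAt (fun y => y * F y) (1 * F x + x * f x) x :=
      (hasDerivAt_id x).mul (hFderiv x hx')
    have h2 : HasDerivAt (fun y => ∫ t in (0:ℝ)..y, F t) (F x) x := by
      apply intervalIntegral.integral_hasDerivAt_right
      · apply ContinuousOn.intervalIntegrable
        apply hFcont.mono
        rw [Set.uIcc_of_le hx'.1]
        exact Set.Icc_subset_Icc le_rfl hx'.2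
      · exact hFcontIoo.stronglyMeasurableAtFilter isOpen_Ioo x hx
      · exact (hFderiv x hx').continuousAt
    have : HasDerivAt H (1 * F x + x * f x - F x) x := h1.sub h2
    convert this using 1
    ring
  intro a ha
  obtain ⟨hqa0, hqab, hqb1⟩ := hq a ha
  have hqaI : qa a ∈ Set.Icc (0:ℝ) 1 := ⟨hqa0.le, hqab.trans hqb1.le⟩
  have hqbI : qb a ∈ Set.Icc (0:ℝ) 1 := ⟨(hqa0.trans_le hqab).le, hqb1.le⟩
  have hqaIoo : qa a ∈ Set.Ioo (0:ℝ) 1 := ⟨hqa0, hqab.trans_lt hqb1⟩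
  have hqbIoo : qb a ∈ Set.Ioo (0:ℝ) 1 := ⟨hqa0.trans_le hqab, hqb1⟩
  set A := f (qb a) with hA
  set B := f (qa a) with hB
  have hApos : 0 < A := hfpos _ hqbI
  have hBpos : 0 < B := hfpos _ hqaI
  have hDpos : 0 < 1 - qb a + qa a := by linarith
  set u := deriv qb a with hu
  set v := deriv qa a with hv
  have hsn : s ∈ nhds a := hs.mem_nhds ha
  have hqb' : HasDerivAt qb u a := (hqb.differentiableAt hsn).hasDerivAt
  have hqa' : HasDerivAt qa v a := (hqa.differentiableAt hsn).hasDerivAt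
  have hFqb : HasDerivAt (fun α => F (qb α)) (A * u) a :=
    (hFderiv _ hqbI).comp a hqb'
  have hFqa : HasDerivAt (fun α => F (qa α)) (B * v) a :=
    (hFderiv _ hqaI).comp a hqa'
  have hHqb : HasDerivAt (fun α => H (qb α)) (qb a * A * u) a := by
    have : HasDerivAt (fun α => H (qb α)) (qb a * f (qb a) * u) a := (hH _ hqbIoo).comp a hqb'
    convert this using 1
    all_goals ring
  have hHqa : HasDerivAt (fun α => H (qa α)) (qa a * B * v) a := by
    have : HasDerivAt (fun α => H (qa α)) (qa a * f (qa a) * v) a := (hH _ hqaIoo).comp a hqa'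
    convert this using 1
    all_goals ring
  -- first constraint differentiated
  have e1 : A * u - B * v = 1 := by
    have hφ : HasDerivAt (fun α => F (qb α) - F (qa α)) (A * u - B * v) a := hFqb.sub hFqa
    have heq : (fun α => F (qb α) - F (qa α)) =ᶠ[nhds a] (fun α => α) :=
      Filter.eventuallyEq_of_mem hsn hc1
    have hid : HasDerivAt (fun α : ℝ => α) (A * u - B * v) a :=
      hφ.congr_of_eventuallyEq heq.symm
    have := hid.unique (hasDerivAt_id a)
    linarith [this]
  -- second constraint differentiated
  have e2 : qb a * A * u - qa a * B * v - A * u = 0 := by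
    have hψ : HasDerivAt (fun α => H (qb α) - H (qa α) + 1 - F (qb α))
        (qb a * A * u - qa a * B * v - A * u) a := by
      have : HasDerivAt (fun α => H (qb α) - H (qa α) + 1 - F (qb α))
          (qb a * A * u - qa a * B * v - A * u) a := ((hHqb.sub hHqa).add_const 1).sub hFqb
      convert this using 1
      all_goals ring
    have heq : (fun α => H (qb α) - H (qa α) + 1 - F (qb α)) =ᶠ[nhds a]
        (fun _ => β) := by
      apply Filter.eventuallyEq_of_mem hsn
      intro α hα
      obtain ⟨h0, h1, h2⟩ := hq α hα
      have hsub : Set.uIcc (qa α) (qb α) ⊆ Set.Ioo (0:ℝ) 1 := by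
        rw [Set.uIcc_of_le h1]
        exact Set.Icc_subset_Ioo h0 h2
      have hint : (∫ μ in (qa α)..(qb α), μ * f μ) = H (qb α) - H (qa α) := by
        apply intervalIntegral.integral_eq_sub_of_hasDerivAt
        · intro x hx
          exact hH x (hsub hx)
        · apply ContinuousOn.intervalIntegrable
          exact continuousOn_id.mul (hfcont.mono (hsub.trans Set.Ioo_subset_Icc_self))
      have := hc2 α hα
      rw [hint] at this
      simpa using this
    have hconst : HasDerivAt (fun _ : ℝ => β) (qb a * A * u - qa a * B * v - A * u) a :=
      hψ.congr_of_eventuallyEq heq.symm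
    have := hconst.unique (hasDerivAt_const a β)
    linarith [this]
  have hu_eq : u = qa a / (A * (1 - qb a + qa a)) := by
    rw [eq_div_iff (by positivity)]
    linear_combination qa a * e1 - e2
  have hv_eq : v = (qb a - 1) / (B * (1 - qb a + qa a)) := by
    rw [eq_div_iff (by positivity)]
    linear_combination (qb a - 1) * e1 - e2
  refine ⟨hu_eq, ?_, hv_eq, ?_⟩
  · rw [hu_eq]; positivity
  · rw [hv_eq]
    apply div_neg_of_neg_of_pos
    · linarith
    · positivity
end

section
/- Define V*(α) = ∫_{q_α(α)}^1 μ f(μ) dμ where q_α(α), q_β(α) satisfy the budget constraints F(q_β) − F(q_α) = α and ∫_{q_α}^{q_β} μ f(μ)dμ + 1 − F(q_β) = β, with F a C¹ CDF with density f > 0 on [0,1] and 0 < q_α ≤ q_β < 1. Then dV*/dα = q_α(1 − q_β)/(1 − q_β + q_α) > 0. -/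
/-- Marginal value of screening: with `V*(α) = ∫_{q_α(α)}^1 μ f(μ) dμ` and
`q_α(α), q_β(α)` satisfying the budget constraints, the derivative is
`dV*/dα = q_α(1 - q_β)/(1 - q_β + q_α) > 0`. -/
theorem marginal_value_of_screening
    (F f : ℝ → ℝ) (β : ℝ) (qa qb : ℝ → ℝ) (s : Set ℝ) (hs : IsOpen s)
    (hFderiv : ∀ x ∈ Set.Icc (0:ℝ) 1, HasDerivAt F (f x) x)
    (hfcont : ContinuousOn f (Set.Icc (0:ℝ) 1))
    (hfpos : ∀ x ∈ Set.Icc (0:ℝ) 1, 0 < f x)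
    (hF0 : F 0 = 0) (hF1 : F 1 = 1)
    (hq : ∀ a ∈ s, 0 < qa a ∧ qa a ≤ qb a ∧ qb a < 1)
    (hc1 : ∀ a ∈ s, F (qb a) - F (qa a) = a)
    (hc2 : ∀ a ∈ s, (∫ μ in (qa a)..(qb a), μ * f μ) + 1 - F (qb a) = β)
    (hqa : DifferentiableOn ℝ qa s) (hqb : DifferentiableOn ℝ qb s) :
    ∀ a ∈ s,
      HasDerivAt (fun a => ∫ μ in (qa a)..1, μ * f μ)
        (qa a * (1 - qb a) / (1 - qb a + qa a)) a ∧
      0 < qa a * (1 - qb a) / (1 - qb a + qa a) := by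
  intro a ha
  obtain ⟨hqa0, hqab, hqb1⟩ := hq a ha
  have hqaIoo : qa a ∈ Set.Ioo (0:ℝ) 1 := ⟨hqa0, lt_of_le_of_lt hqab hqb1⟩
  have hqbIoo : qb a ∈ Set.Ioo (0:ℝ) 1 := ⟨lt_of_lt_of_le hqa0 hqab, hqb1⟩
  have hqaI : qa a ∈ Set.Icc (0:ℝ) 1 := ⟨hqa0.le, hqaIoo.2.le⟩
  have hqbI : qb a ∈ Set.Icc (0:ℝ) 1 := ⟨hqbIoo.1.le, hqb1.le⟩
  set g : ℝ → ℝ := fun μ => μ * f μ with hg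
  have hgcont : ContinuousOn g (Set.Icc (0:ℝ) 1) :=
    (continuousOn_id).mul hfcont
  have hint : ∀ u v : ℝ, u ∈ Set.Icc (0:ℝ) 1 → v ∈ Set.Icc (0:ℝ) 1 →
      IntervalIntegrable g MeasureTheory.volume u v := by
    intro u v hu hv
    exact (hgcont.mono (Set.uIcc_subset_Icc hu hv)).intervalIntegrable
  -- primitive
  set Φ : ℝ → ℝ := fun x => ∫ μ in (0:ℝ)..x, g μ with hΦdef
  have hΦ : ∀ x ∈ Set.Ioo (0:ℝ) 1, HasDerivAt Φ (g x) x := by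
    intro x hx
    have hmemnhds : Set.Icc (0:ℝ) 1 ∈ nhds x := Icc_mem_nhds hx.1 hx.2
    have hca : ContinuousAt g x := hgcont.continuousAt hmemnhds
    exact intervalIntegral.integral_hasDerivAt_right
      (hint 0 x (Set.left_mem_Icc.2 one_pos.le) ⟨hx.1.le, hx.2.le⟩)
      ((hgcont.mono Set.Ioo_subset_Icc_self).stronglyMeasurableAtFilter isOpen_Ioo x hx)
      hca
  -- derivatives of qa, qb
  have hda : HasDerivAt qa (derivWithin qa s a) a := by
    have := (hqa a ha).differentiableAt (hs.mem_nhds ha)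
    rw [derivWithin_of_isOpen hs ha]
    exact this.hasDerivAt
  have hdb : HasDerivAt qb (derivWithin qb s a) a := by
    have := (hqb a ha).differentiableAt (hs.mem_nhds ha)
    rw [derivWithin_of_isOpen hs ha]
    exact this.hasDerivAt
  set da := derivWithin qa s a
  set db := derivWithin qb s a
  -- first constraint derivative
  have h1 : HasDerivAt (fun x => F (qb x) - F (qa x))
      (f (qb a) * db - f (qa a) * da) a :=
    ((hFderiv _ hqbI).comp a hdb).sub ((hFderiv _ hqaI).comp a hda)
  have h1' : HasDerivAt (fun x => F (qb x) - F (qa x)) 1 a := by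
    have hid : HasDerivAt (fun x : ℝ => x) 1 a := hasDerivAt_id a
    apply hid.congr_of_eventuallyEq
    filter_upwards [hs.mem_nhds ha] with x hx
    exact hc1 x hx
  have E1 : f (qb a) * db - f (qa a) * da = 1 := h1.unique h1'
  -- second constraint derivative
  have h2 : HasDerivAt (fun x => Φ (qb x) - Φ (qa x) + 1 - F (qb x))
      (g (qb a) * db - g (qa a) * da + 0 - f (qb a) * db) a :=
    ((((hΦ _ hqbIoo).comp a hdb).sub ((hΦ _ hqaIoo).comp a hda)).add
      (hasDerivAt_const a 1)).sub ((hFderiv _ hqbI).comp a hdb)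
  have h2' : HasDerivAt (fun x => Φ (qb x) - Φ (qa x) + 1 - F (qb x)) 0 a := by
    have hconst : HasDerivAt (fun _ : ℝ => β) 0 a := hasDerivAt_const a β
    apply hconst.congr_of_eventuallyEq
    filter_upwards [hs.mem_nhds ha] with x hx
    obtain ⟨hx0, hxab, hxb1⟩ := hq x hx
    have hxaI : qa x ∈ Set.Icc (0:ℝ) 1 := ⟨hx0.le, (hxab.trans hxb1.le)⟩
    have hxbI : qb x ∈ Set.Icc (0:ℝ) 1 := ⟨hx0.le.trans hxab, hxb1.le⟩
    have hadd := intervalIntegral.integral_add_adjacent_intervals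
      (hint 0 (qa x) (Set.left_mem_Icc.2 one_pos.le) hxaI)
      (hint (qa x) (qb x) hxaI hxbI)
    have : (∫ μ in (qa x)..(qb x), g μ) = Φ (qb x) - Φ (qa x) := by
      simp only [hΦdef]; linarith
    rw [← hc2 x hx, this]
  have E2 : g (qb a) * db - g (qa a) * da + 0 - f (qb a) * db = 0 := h2.unique h2'
  -- denominator
  have hD : (0:ℝ) < 1 - qb a + qa a := by linarith
  -- target
  have key : -(g (qa a) * da) = qa a * (1 - qb a) / (1 - qb a + qa a) := by
    rw [eq_div_iff (ne_of_gt hD)]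
    simp only [hg] at E2 ⊢
    linear_combination (qa a * (1 - qb a)) * E1 + qa a * E2
  constructor
  · have hmain : HasDerivAt (fun x => (∫ μ in (0:ℝ)..1, g μ) - Φ (qa x))
        (0 - g (qa a) * da) a :=
      (hasDerivAt_const a _).sub ((hΦ _ hqaIoo).comp a hda)
    rw [zero_sub] at hmain
    have heq : (fun x => ∫ μ in (qa x)..1, μ * f μ) =ᶠ[nhds a]
        (fun x => (∫ μ in (0:ℝ)..1, g μ) - Φ (qa x)) := by
      filter_upwards [hs.mem_nhds ha] with x hx
      obtain ⟨hx0, hxab, hxb1⟩ := hq x hx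
      have hxaI : qa x ∈ Set.Icc (0:ℝ) 1 := ⟨hx0.le, (hxab.trans hxb1.le)⟩
      have hadd := intervalIntegral.integral_add_adjacent_intervals
        (hint 0 (qa x) (Set.left_mem_Icc.2 one_pos.le) hxaI)
        (hint (qa x) 1 hxaI (Set.right_mem_Icc.2 one_pos.le))
      simp only [hΦdef, hg] at hadd ⊢
      linarith
    rw [← key]
    exact (hmain.congr_of_eventuallyEq heq)
  · apply div_pos _ hD
    exact mul_pos hqa0 (by linarith)
end

section
/- With the same setup, the second derivative satisfies d²V*/dα² = −[(1−q_β)³ f(q_β) + q_α³ f(q_α)] / [f(q_α) f(q_β) (1 − q_β + q_α)³] < 0, hence V*(α) is strictly concave in α. -/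
/-- Concavity of the value of screening: with `V*(α) = ∫_{q_α(α)}^1 μ f(μ) dμ`,
the second derivative is
`d²V*/dα² = -[(1-q_β)³ f(q_β) + q_α³ f(q_α)] / [f(q_α) f(q_β) (1-q_β+q_α)³] < 0`,
hence `V*` is strictly concave in the screening budget `α`. -/
theorem value_of_screening_concave
    (F f : ℝ → ℝ) (β : ℝ) (qa qb : ℝ → ℝ) (s : Set ℝ) (hs : IsOpen s)
    (hconv : Convex ℝ s)
    (hFderiv : ∀ x ∈ Set.Icc (0:ℝ) 1, HasDerivAt F (f x) x)
    (hfcont : ContinuousOn f (Set.Icc (0:ℝ) 1))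
    (hfpos : ∀ x ∈ Set.Icc (0:ℝ) 1, 0 < f x)
    (hF0 : F 0 = 0) (hF1 : F 1 = 1)
    (hq : ∀ a ∈ s, 0 < qa a ∧ qa a ≤ qb a ∧ qb a < 1)
    (hc1 : ∀ a ∈ s, F (qb a) - F (qa a) = a)
    (hc2 : ∀ a ∈ s, (∫ μ in (qa a)..(qb a), μ * f μ) + 1 - F (qb a) = β)
    (hqa : ContDiffOn ℝ 1 qa s) (hqb : ContDiffOn ℝ 1 qb s) :
    (∀ a ∈ s,
      deriv (deriv (fun a => ∫ μ in (qa a)..1, μ * f μ)) a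
        = -(((1 - qb a) ^ 3 * f (qb a) + (qa a) ^ 3 * f (qa a))
            / (f (qa a) * f (qb a) * (1 - qb a + qa a) ^ 3)) ∧
      deriv (deriv (fun a => ∫ μ in (qa a)..1, μ * f μ)) a < 0) ∧
    StrictConcaveOn ℝ s (fun a => ∫ μ in (qa a)..1, μ * f μ) := by
  -- basic membership facts
  have hqaIoo : ∀ a ∈ s, qa a ∈ Set.Ioo (0:ℝ) 1 := fun a ha =>
    ⟨(hq a ha).1, lt_of_le_of_lt (hq a ha).2.1 (hq a ha).2.2⟩
  have hqbIoo : ∀ a ∈ s, qb a ∈ Set.Ioo (0:ℝ) 1 := fun a ha =>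
    ⟨lt_of_lt_of_le (hq a ha).1 (hq a ha).2.1, (hq a ha).2.2⟩
  have hIooIcc : Set.Ioo (0:ℝ) 1 ⊆ Set.Icc 0 1 := Set.Ioo_subset_Icc_self
  -- continuity of the integrand
  have hgc : ContinuousOn (fun μ : ℝ => μ * f μ) (Set.Icc 0 1) :=
    continuousOn_id.mul hfcont
  -- FTC: derivative of x ↦ ∫ μ in x..1, μ f μ
  have hFTC : ∀ x ∈ Set.Ioo (0:ℝ) 1,
      HasDerivAt (fun u => ∫ μ in u..1, μ * f μ) (-(x * f x)) x := by
    intro x hx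
    have hint : IntervalIntegrable (fun μ : ℝ => μ * f μ) MeasureTheory.volume x 1 := by
      apply ContinuousOn.intervalIntegrable
      apply hgc.mono
      rw [Set.uIcc_of_le (le_of_lt hx.2)]
      exact Set.Icc_subset_Icc (le_of_lt hx.1) le_rfl
    have hmeas : StronglyMeasurableAtFilter (fun μ : ℝ => μ * f μ) (nhds x) :=
      ContinuousOn.stronglyMeasurableAtFilter isOpen_Ioo (hgc.mono hIooIcc) x hx
    have hcx : ContinuousAt (fun μ : ℝ => μ * f μ) x :=
      (hgc x (hIooIcc hx)).continuousAt (Icc_mem_nhds hx.1 hx.2)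
    simpa using intervalIntegral.integral_hasDerivAt_left hint hmeas hcx
  -- differentiability of qa, qb and their derivative values
  have hqaD : ∀ a ∈ s, HasDerivAt qa (deriv qa a) a := fun a ha =>
    ((hqa.differentiableOn one_ne_zero a ha).differentiableAt (hs.mem_nhds ha)).hasDerivAt
  have hqbD : ∀ a ∈ s, HasDerivAt qb (deriv qb a) a := fun a ha =>
    ((hqb.differentiableOn one_ne_zero a ha).differentiableAt (hs.mem_nhds ha)).hasDerivAt
  -- derivative formulas for qa, qb from the constraints
  have hD : ∀ a ∈ s, 0 < 1 - qb a + qa a := by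
    intro a ha
    have := (hq a ha).1
    have := (hq a ha).2.2
    linarith
  have hfa : ∀ a ∈ s, 0 < f (qa a) := fun a ha => hfpos _ (hIooIcc (hqaIoo a ha))
  have hfb : ∀ a ∈ s, 0 < f (qb a) := fun a ha => hfpos _ (hIooIcc (hqbIoo a ha))
  have key : ∀ a ∈ s,
      deriv qa a = (qb a - 1) / (f (qa a) * (1 - qb a + qa a)) ∧
      deriv qb a = qa a / (f (qb a) * (1 - qb a + qa a)) := by
    intro a ha
    -- derivative of first constraint
    have hFa : HasDerivAt (fun b => F (qa b)) (f (qa a) * deriv qa a) a :=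
      (hFderiv (qa a) (hIooIcc (hqaIoo a ha))).comp a (hqaD a ha)
    have hFb : HasDerivAt (fun b => F (qb b)) (f (qb a) * deriv qb a) a :=
      (hFderiv (qb a) (hIooIcc (hqbIoo a ha))).comp a (hqbD a ha)
    have e1 : f (qb a) * deriv qb a - f (qa a) * deriv qa a = 1 := by
      have h1 : HasDerivAt (fun b => F (qb b) - F (qa b))
          (f (qb a) * deriv qb a - f (qa a) * deriv qa a) a := hFb.sub hFa
      have h2 : HasDerivAt (fun b => F (qb b) - F (qa b)) 1 a := by
        have : (fun b => F (qb b) - F (qa b)) =ᶠ[nhds a] fun b => b :=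
          Filter.eventuallyEq_of_mem (hs.mem_nhds ha) fun b hb => hc1 b hb
        exact (hasDerivAt_id' a).congr_of_eventuallyEq this
      exact h1.unique h2
    -- derivative of second constraint
    have hPa : HasDerivAt (fun b => ∫ μ in (qa b)..1, μ * f μ)
        (-(qa a * f (qa a)) * deriv qa a) a :=
      (hFTC (qa a) (hqaIoo a ha)).comp a (hqaD a ha)
    have hPb : HasDerivAt (fun b => ∫ μ in (qb b)..1, μ * f μ)
        (-(qb a * f (qb a)) * deriv qb a) a :=
      (hFTC (qb a) (hqbIoo a ha)).comp a (hqbD a ha)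
    have e2 : -(qa a * f (qa a)) * deriv qa a - -(qb a * f (qb a)) * deriv qb a
        - f (qb a) * deriv qb a = 0 := by
      have h1 : HasDerivAt
          (fun b => ((∫ μ in (qa b)..1, μ * f μ) - ∫ μ in (qb b)..1, μ * f μ) + 1 - F (qb b))
          (-(qa a * f (qa a)) * deriv qa a - -(qb a * f (qb a)) * deriv qb a
            - f (qb a) * deriv qb a) a := (((hPa.sub hPb).add_const 1).sub hFb)
      have heq : (fun b => ((∫ μ in (qa b)..1, μ * f μ) - ∫ μ in (qb b)..1, μ * f μ)
          + 1 - F (qb b)) =ᶠ[nhds a] fun _ => β := by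
        apply Filter.eventuallyEq_of_mem (hs.mem_nhds ha)
        intro b hb
        have hib : ∀ x ∈ Set.Ioo (0:ℝ) 1, ∀ y ∈ Set.Icc (0:ℝ) 1,
            IntervalIntegrable (fun μ : ℝ => μ * f μ) MeasureTheory.volume x y := by
          intro x hx y hy
          apply ContinuousOn.intervalIntegrable
          apply hgc.mono
          apply Set.uIcc_subset_Icc (hIooIcc hx) hy
        have hsplit : (∫ μ in (qa b)..(qb b), μ * f μ)
            = (∫ μ in (qa b)..1, μ * f μ) - ∫ μ in (qb b)..1, μ * f μ := by
          rw [eq_sub_iff_add_eq]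
          exact intervalIntegral.integral_add_adjacent_intervals
            (hib (qa b) (hqaIoo b hb) (qb b) (hIooIcc (hqbIoo b hb)))
            (hib (qb b) (hqbIoo b hb) 1 (Set.right_mem_Icc.mpr zero_le_one))
        have := hc2 b hb
        rw [hsplit] at this
        exact this
      have h2 : HasDerivAt
          (fun b => ((∫ μ in (qa b)..1, μ * f μ) - ∫ μ in (qb b)..1, μ * f μ) + 1 - F (qb b))
          0 a := (hasDerivAt_const a β).congr_of_eventuallyEq heq
      exact h1.unique h2
    -- solve the linear system
    have hfa' := (hfa a ha).ne'
    have hfb' := (hfb a ha).ne'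
    have hD' := (hD a ha).ne'
    have hA : f (qa a) * deriv qa a * (1 - qb a + qa a) = qb a - 1 := by
      linear_combination (qb a - 1) * e1 - e2
    have hB : f (qb a) * deriv qb a * (1 - qb a + qa a) = qa a := by
      linear_combination (qa a) * e1 - e2
    constructor
    · field_simp
      linarith [hA]
    · field_simp
      linarith [hB]
  -- first derivative of V
  set V : ℝ → ℝ := fun a => ∫ μ in (qa a)..1, μ * f μ with hVdef
  set g : ℝ → ℝ := fun a => qa a * (1 - qb a) / (1 - qb a + qa a) with hgdef
  have hVd : ∀ a ∈ s, HasDerivAt V (g a) a := by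
    intro a ha
    have hPa : HasDerivAt V (-(qa a * f (qa a)) * deriv qa a) a :=
      (hFTC (qa a) (hqaIoo a ha)).comp a (hqaD a ha)
    have : -(qa a * f (qa a)) * deriv qa a = g a := by
      rw [(key a ha).1, hgdef]
      have hfa' := (hfa a ha).ne'
      have hD' := (hD a ha).ne'
      field_simp
      ring
    rwa [this] at hPa
  have hderivV : ∀ a ∈ s, deriv V a = g a := fun a ha => (hVd a ha).deriv
  -- second derivative of V
  have hsecond : ∀ a ∈ s, deriv (deriv V) a
      = -(((1 - qb a) ^ 3 * f (qb a) + (qa a) ^ 3 * f (qa a))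
          / (f (qa a) * f (qb a) * (1 - qb a + qa a) ^ 3)) := by
    intro a ha
    have heq : deriv V =ᶠ[nhds a] g :=
      Filter.eventuallyEq_of_mem (hs.mem_nhds ha) fun b hb => hderivV b hb
    rw [heq.deriv_eq]
    -- derivative of g via quotient rule
    have hN : HasDerivAt (fun b => qa b * (1 - qb b))
        (deriv qa a * (1 - qb a) + qa a * (0 - deriv qb a)) a :=
      (hqaD a ha).mul ((hasDerivAt_const a (1:ℝ)).sub (hqbD a ha))
    have hDD : HasDerivAt (fun b => 1 - qb b + qa b)
        ((0 - deriv qb a) + deriv qa a) a :=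
      ((hasDerivAt_const a (1:ℝ)).sub (hqbD a ha)).add (hqaD a ha)
    have hgd : HasDerivAt g
        (((deriv qa a * (1 - qb a) + qa a * (0 - deriv qb a)) * (1 - qb a + qa a)
          - qa a * (1 - qb a) * ((0 - deriv qb a) + deriv qa a))
          / (1 - qb a + qa a) ^ 2) a := hN.div hDD (hD a ha).ne'
    rw [hgd.deriv, (key a ha).1, (key a ha).2]
    have hfa' := (hfa a ha).ne'
    have hfb' := (hfb a ha).ne'
    have hD' := (hD a ha).ne'
    field_simp
    ring
  have hneg : ∀ a ∈ s, deriv (deriv V) a < 0 := by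
    intro a ha
    rw [hsecond a ha]
    have h1 : 0 < 1 - qb a := by linarith [(hq a ha).2.2]
    have hnum : 0 < (1 - qb a) ^ 3 * f (qb a) + (qa a) ^ 3 * f (qa a) :=
      add_pos (mul_pos (pow_pos h1 3) (hfb a ha))
        (mul_pos (pow_pos (hq a ha).1 3) (hfa a ha))
    have hden : 0 < f (qa a) * f (qb a) * (1 - qb a + qa a) ^ 3 :=
      mul_pos (mul_pos (hfa a ha) (hfb a ha)) (pow_pos (hD a ha) 3)
    exact neg_lt_zero.mpr (div_pos hnum hden)
  refine ⟨fun a ha => ⟨hsecond a ha, hneg a ha⟩, ?_⟩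
  apply strictConcaveOn_of_deriv2_neg hconv
  · exact fun a ha => ((hVd a ha).differentiableAt.continuousAt).continuousWithinAt
  · intro a ha
    rw [hs.interior_eq] at ha
    show deriv^[2] V a < 0
    rw [show deriv^[2] V = deriv (deriv V) by rfl]
    exact hneg a ha
end

section
/- Let F be a continuous strictly increasing CDF on [0,1], α ∈ (0,β), α+β < 1. Define g(ρ) = (1/α) ∫_{q_α(ρ)}^{q_β(ρ)} μ dF(μ) with q_β(ρ) = F^{-1}(1 − β + αρ) and q_α(ρ) = F^{-1}(1 − β − α + αρ). Then for all 0 ≤ ρ₁ < ρ₂ ≤ 1, 0 ≤ g(ρ₂) − g(ρ₁) ≤ c_F (ρ₂ − ρ₁), where c_F = F^{-1}(1−β+α) − F^{-1}(1−β−α) < 1. In particular g is a monotone-increasing contraction on [0,1]. -/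
/-- Bounds for `∫ x in u..v, x ∂μ` for a Stieltjes measure. -/
lemma integral_id_bounds (S : StieltjesFunction ℝ) (u v : ℝ) (huv : u ≤ v) :
    u * (S.measure (Set.Ioc u v)).toReal ≤ (∫ x in u..v, x ∂S.measure) ∧
    (∫ x in u..v, x ∂S.measure) ≤ v * (S.measure (Set.Ioc u v)).toReal := by
  have hfin : S.measure (Set.Ioc u v) < ⊤ := by
    rw [S.measure_Ioc]; exact ENNReal.ofReal_lt_top
  have hint : MeasureTheory.IntegrableOn (fun x : ℝ => x) (Set.Ioc u v) S.measure :=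
    (continuous_id.intervalIntegrable u v).1
  rw [intervalIntegral.integral_of_le huv]
  constructor
  · have h := MeasureTheory.setIntegral_mono_on
      (MeasureTheory.integrableOn_const hfin.ne) hint measurableSet_Ioc
      (fun x hx => hx.1.le : ∀ x ∈ Set.Ioc u v, u ≤ x)
    rwa [MeasureTheory.setIntegral_const, MeasureTheory.measureReal_def, smul_eq_mul, mul_comm] at h
  · have h := MeasureTheory.setIntegral_mono_on
      hint (MeasureTheory.integrableOn_const hfin.ne) measurableSet_Ioc
      (fun x hx => hx.2 : ∀ x ∈ Set.Ioc u v, x ≤ v)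
    rwa [MeasureTheory.setIntegral_const, MeasureTheory.measureReal_def, smul_eq_mul, mul_comm] at h

/-- The fixed-point update `g(ρ) = (1/α)∫_{q_α(ρ)}^{q_β(ρ)} μ dF(μ)`, with
`q_β(ρ) = F⁻¹(1-β+αρ)` and `q_α(ρ) = F⁻¹(1-β-α+αρ)`, is a monotone increasing
contraction on `[0,1]` with constant `c_F = F⁻¹(1-β+α) - F⁻¹(1-β-α) < 1`. -/
theorem fixed_point_update_contraction
    (S : StieltjesFunction ℝ) (Finv : ℝ → ℝ) (α β : ℝ)
    (hα : 0 < α) (hαβ : α < β) (hβ : β < 1) (hsum : α + β < 1)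
    (hS0 : S 0 = 0) (hS1 : S 1 = 1) (hScont : Continuous S)
    (hSmono : StrictMonoOn S (Set.Icc (0:ℝ) 1))
    (hFinv : ∀ p ∈ Set.Icc (0:ℝ) 1, S (Finv p) = p ∧ Finv p ∈ Set.Icc (0:ℝ) 1) :
    (Finv (1 - β + α) - Finv (1 - β - α) < 1) ∧
    ∀ ρ₁ ρ₂ : ℝ, 0 ≤ ρ₁ → ρ₁ < ρ₂ → ρ₂ ≤ 1 →
      0 ≤ (1/α) * (∫ x in (Finv (1 - β - α + α * ρ₂))..(Finv (1 - β + α * ρ₂)), x ∂S.measure)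
          - (1/α) * (∫ x in (Finv (1 - β - α + α * ρ₁))..(Finv (1 - β + α * ρ₁)), x ∂S.measure) ∧
      (1/α) * (∫ x in (Finv (1 - β - α + α * ρ₂))..(Finv (1 - β + α * ρ₂)), x ∂S.measure)
          - (1/α) * (∫ x in (Finv (1 - β - α + α * ρ₁))..(Finv (1 - β + α * ρ₁)), x ∂S.measure)
        ≤ (Finv (1 - β + α) - Finv (1 - β - α)) * (ρ₂ - ρ₁) := by
  -- monotonicity of Finv
  have hmono : ∀ p ∈ Set.Icc (0:ℝ) 1, ∀ q ∈ Set.Icc (0:ℝ) 1, p ≤ q → Finv p ≤ Finv q := by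
    intro p hp q hq hpq
    by_contra h
    push_neg at h
    have := hSmono (hFinv q hq).2 (hFinv p hp).2 h
    rw [(hFinv p hp).1, (hFinv q hq).1] at this
    linarith
  have hmemU : (1 - β + α) ∈ Set.Icc (0:ℝ) 1 := ⟨by linarith, by linarith⟩
  have hmemL : (1 - β - α) ∈ Set.Icc (0:ℝ) 1 := ⟨by linarith, by linarith⟩
  obtain ⟨hSU, hU⟩ := hFinv _ hmemU
  obtain ⟨hSL, hL⟩ := hFinv _ hmemL
  have hUlt : Finv (1 - β + α) < 1 := by
    rcases lt_or_eq_of_le hU.2 with h | h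
    · exact h
    · rw [h] at hSU; linarith
  have hLgt : 0 < Finv (1 - β - α) := by
    rcases lt_or_eq_of_le hL.1 with h | h
    · exact h
    · rw [← h] at hSL; linarith
  refine ⟨by linarith, ?_⟩
  intro ρ₁ ρ₂ h0 h12 h21
  have hr1 : 0 ≤ α * ρ₁ := mul_nonneg hα.le h0
  have hr2 : α * ρ₂ ≤ α := by nlinarith
  have hr12 : α * ρ₁ < α * ρ₂ := by nlinarith
  set pa1 := 1 - β - α + α * ρ₁ with hpa1
  set pb1 := 1 - β + α * ρ₁ with hpb1
  set pa2 := 1 - β - α + α * ρ₂ with hpa2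
  set pb2 := 1 - β + α * ρ₂ with hpb2
  have hma1 : pa1 ∈ Set.Icc (0:ℝ) 1 := ⟨by linarith, by linarith⟩
  have hmb1 : pb1 ∈ Set.Icc (0:ℝ) 1 := ⟨by linarith, by linarith⟩
  have hma2 : pa2 ∈ Set.Icc (0:ℝ) 1 := ⟨by linarith, by linarith⟩
  have hmb2 : pb2 ∈ Set.Icc (0:ℝ) 1 := ⟨by linarith, by linarith⟩
  obtain ⟨hSa1, ha1⟩ := hFinv _ hma1
  obtain ⟨hSb1, hb1⟩ := hFinv _ hmb1
  obtain ⟨hSa2, ha2⟩ := hFinv _ hma2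
  obtain ⟨hSb2, hb2⟩ := hFinv _ hmb2
  set a1 := Finv pa1
  set b1 := Finv pb1
  set a2 := Finv pa2
  set b2 := Finv pb2
  have h_a1a2 : a1 ≤ a2 := hmono _ hma1 _ hma2 (by dsimp [pa1, pa2]; linarith)
  have h_a2b1 : a2 ≤ b1 := hmono _ hma2 _ hmb1 (by dsimp [pa2, pb1]; nlinarith)
  have h_b1b2 : b1 ≤ b2 := hmono _ hmb1 _ hmb2 (by dsimp [pb1, pb2]; linarith)
  -- measure masses
  have hΔ : (0:ℝ) ≤ α * (ρ₂ - ρ₁) := by nlinarith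
  have hmassb : (S.measure (Set.Ioc b1 b2)).toReal = α * (ρ₂ - ρ₁) := by
    rw [S.measure_Ioc, hSb1, hSb2, ENNReal.toReal_ofReal (by dsimp [pb1, pb2]; linarith)]
    dsimp [pb1, pb2]; ring
  have hmassa : (S.measure (Set.Ioc a1 a2)).toReal = α * (ρ₂ - ρ₁) := by
    rw [S.measure_Ioc, hSa1, hSa2, ENNReal.toReal_ofReal (by dsimp [pa1, pa2]; linarith)]
    dsimp [pa1, pa2]; ring
  -- splitting
  have hint : ∀ u v : ℝ, IntervalIntegrable (fun x : ℝ => x) S.measure u v :=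
    fun u v => continuous_id.intervalIntegrable u v
  have hsplit1 := intervalIntegral.integral_add_adjacent_intervals
    (hint a1 a2) (hint a2 b2)
  have hsplit2 := intervalIntegral.integral_add_adjacent_intervals
    (hint a1 b1) (hint b1 b2)
  have hkey : (∫ x in a2..b2, x ∂S.measure) - (∫ x in a1..b1, x ∂S.measure)
      = (∫ x in b1..b2, x ∂S.measure) - (∫ x in a1..a2, x ∂S.measure) := by
    linarith
  obtain ⟨hbl, hbu⟩ := integral_id_bounds S b1 b2 h_b1b2
  obtain ⟨hal, hau⟩ := integral_id_bounds S a1 a2 h_a1a2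
  rw [hmassb] at hbl hbu
  rw [hmassa] at hal hau
  have hb2U : b2 ≤ Finv (1 - β + α) := hmono _ hmb2 _ hmemU (by dsimp [pb2]; linarith)
  have ha1L : Finv (1 - β - α) ≤ a1 := hmono _ hmemL _ hma1 (by dsimp [pa1]; linarith)
  have hm1 := mul_le_mul_of_nonneg_right h_a2b1 hΔ
  have hm2 := mul_le_mul_of_nonneg_right hb2U hΔ
  have hm3 := mul_le_mul_of_nonneg_right ha1L hΔ
  constructor
  · have hpos : 0 ≤ (∫ x in a2..b2, x ∂S.measure) - (∫ x in a1..b1, x ∂S.measure) := by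
      rw [hkey]; linarith
    rw [← mul_sub]
    exact mul_nonneg (by positivity) hpos
  · have hdiff : (∫ x in a2..b2, x ∂S.measure) - (∫ x in a1..b1, x ∂S.measure)
        ≤ (Finv (1 - β + α) - Finv (1 - β - α)) * (α * (ρ₂ - ρ₁)) := by
      rw [hkey]
      have : (Finv (1 - β + α) - Finv (1 - β - α)) * (α * (ρ₂ - ρ₁))
          = Finv (1 - β + α) * (α * (ρ₂ - ρ₁)) - Finv (1 - β - α) * (α * (ρ₂ - ρ₁)) := by ring
      rw [this]; linarith
    rw [div_mul_eq_mul_div, div_mul_eq_mul_div, one_mul, one_mul, div_sub_div_same,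
      div_le_iff₀ hα]
    calc (∫ x in a2..b2, x ∂S.measure) - (∫ x in a1..b1, x ∂S.measure)
        ≤ (Finv (1 - β + α) - Finv (1 - β - α)) * (α * (ρ₂ - ρ₁)) := hdiff
      _ = (Finv (1 - β + α) - Finv (1 - β - α)) * (ρ₂ - ρ₁) * α := by ring
end

section
/- Let F be a continuous strictly increasing CDF on [0,1] with density f > 0, let α ∈ (0,β), β ∈ (0,1), α+β < 1. Define V(q_b) = ∫_{q_a(q_b)}^{q_b} μ dF + ∫_{q_β(q_b)}^1 μ dF, where q_a(q_b) = F^{-1}(F(q_b) − α) and q_β(q_b) is implicitly defined by ∫_{q_a}^{q_b} μ dF + 1 − F(q_β) = β. Then dV/dq_b = f(q_b)(q_b − q_a)(1 − q_β) > 0 whenever q_b > q_a and q_β < 1; hence V is strictly increasing in q_b. -/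
open intervalIntegral MeasureTheory Set Filter Topology

/-- Pushing the screening band up improves the objective: with screening band
`[q_a(q_b), q_b]` of `F`-mass `α` (so `q_a(q_b) = F⁻¹(F(q_b) - α)`) and direct
allocation band `[q_β(q_b), 1]` determined by the allocation budget constraint,
the value `V(q_b) = ∫_{q_a}^{q_b} μ dF + ∫_{q_β}^1 μ dF` has derivative
`dV/dq_b = f(q_b)(q_b - q_a)(1 - q_β) > 0`, hence `V` is strictly increasing. -/
theorem value_increasing_in_upper_band
    (F Finv f : ℝ → ℝ) (α β : ℝ) (qB : ℝ → ℝ) (s : Set ℝ)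
    (hs : IsOpen s) (hconv : Convex ℝ s)
    (hα : 0 < α) (hαβ : α < β) (hβ : β < 1) (hsum : α + β < 1)
    (hFderiv : ∀ x ∈ Set.Icc (0:ℝ) 1, HasDerivAt F (f x) x)
    (hfcont : ContinuousOn f (Set.Icc (0:ℝ) 1))
    (hfpos : ∀ x ∈ Set.Icc (0:ℝ) 1, 0 < f x)
    (hF0 : F 0 = 0) (hF1 : F 1 = 1)
    (hFinv : ∀ p ∈ Set.Icc (0:ℝ) 1, F (Finv p) = p ∧ Finv p ∈ Set.Icc (0:ℝ) 1)
    (hrange : ∀ q ∈ s, q ∈ Set.Icc (0:ℝ) 1 ∧ α ≤ F q ∧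
      Finv (F q - α) < q ∧ q ≤ qB q ∧ qB q < 1)
    (hcon : ∀ q ∈ s, (∫ μ in (Finv (F q - α))..q, μ * f μ) + 1 - F (qB q) = β)
    (hqB : DifferentiableOn ℝ qB s) :
    (∀ q ∈ s,
      HasDerivAt (fun q => (∫ μ in (Finv (F q - α))..q, μ * f μ)
          + ∫ μ in (qB q)..1, μ * f μ)
        (f q * (q - Finv (F q - α)) * (1 - qB q)) q ∧
      0 < f q * (q - Finv (F q - α)) * (1 - qB q)) ∧
    StrictMonoOn (fun q => (∫ μ in (Finv (F q - α))..q, μ * f μ)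
        + ∫ μ in (qB q)..1, μ * f μ) s := by
  have hFcont : ContinuousOn F (Set.Icc (0:ℝ) 1) :=
    fun x hx => (hFderiv x hx).continuousAt.continuousWithinAt
  have hFmono : StrictMonoOn F (Set.Icc (0:ℝ) 1) := by
    refine strictMonoOn_of_deriv_pos (convex_Icc 0 1) hFcont ?_
    intro x hx
    rw [interior_Icc] at hx
    rw [(hFderiv x (Set.Ioo_subset_Icc_self hx)).deriv]
    exact hfpos x (Set.Ioo_subset_Icc_self hx)
  have hssub : s ⊆ Set.Ioo (0:ℝ) 1 := by
    have h1 : s ⊆ Set.Icc (0:ℝ) 1 := fun q hq => (hrange q hq).1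
    rw [← interior_Icc]
    exact hs.subset_interior_iff.mpr h1
  have hFmap : ∀ x ∈ Set.Icc (0:ℝ) 1, F x ∈ Set.Icc (0:ℝ) 1 := by
    intro x hx
    constructor
    · rw [← hF0]
      exact hFmono.monotoneOn (Set.left_mem_Icc.mpr zero_le_one) hx hx.1
    · rw [← hF1]
      exact hFmono.monotoneOn hx (Set.right_mem_Icc.mpr zero_le_one) hx.2
  have hFinj : Set.InjOn F (Set.Icc (0:ℝ) 1) := hFmono.injOn
  -- continuity of Finv on [0,1]
  have hFinvCont : ContinuousOn Finv (Set.Icc (0:ℝ) 1) := by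
    haveI : CompactSpace (Set.Icc (0:ℝ) 1) := isCompact_iff_compactSpace.mp isCompact_Icc
    set Fr : Set.Icc (0:ℝ) 1 → Set.Icc (0:ℝ) 1 := fun x => ⟨F x, hFmap x x.2⟩ with hFr
    have hFrCont : Continuous Fr :=
      (continuousOn_iff_continuous_restrict.mp hFcont).subtype_mk _
    have hFrBij : Function.Bijective Fr := by
      constructor
      · intro x y hxy
        exact Subtype.ext (hFinj x.2 y.2 (congrArg Subtype.val hxy))
      · intro p
        exact ⟨⟨Finv p, (hFinv p p.2).2⟩, Subtype.ext (hFinv p p.2).1⟩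
    have he : Continuous (Equiv.ofBijective Fr hFrBij) := hFrCont
    let h := he.homeoOfEquivCompactToT2
    rw [continuousOn_iff_continuous_restrict]
    have hres : (Set.Icc (0:ℝ) 1).restrict Finv = fun p => ((h.symm p : Set.Icc (0:ℝ) 1) : ℝ) := by
      funext p
      have h1 : Fr (h.symm p) = p := h.apply_symm_apply p
      have h2 : F ((h.symm p : Set.Icc (0:ℝ) 1) : ℝ) = (p : ℝ) := congrArg Subtype.val h1
      exact hFinj (hFinv p p.2).2 (h.symm p).2 (((hFinv p p.2).1).trans h2.symm)
    change Continuous ((Set.Icc (0:ℝ) 1).restrict Finv)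
    rw [hres]
    exact continuous_subtype_val.comp h.symm.continuous
  -- integrability and FTC for G u = ∫_0^u t f t
  have hgcont : ContinuousOn (fun t : ℝ => t * f t) (Set.Icc (0:ℝ) 1) :=
    continuousOn_id.mul hfcont
  have hgint : ∀ a ∈ Set.Icc (0:ℝ) 1, ∀ b ∈ Set.Icc (0:ℝ) 1,
      IntervalIntegrable (fun t : ℝ => t * f t) volume a b := by
    intro a ha b hb
    exact (hgcont.mono (Set.uIcc_subset_Icc ha hb)).intervalIntegrable
  have h0I : (0:ℝ) ∈ Set.Icc (0:ℝ) 1 := Set.left_mem_Icc.mpr zero_le_one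
  have h1I : (1:ℝ) ∈ Set.Icc (0:ℝ) 1 := Set.right_mem_Icc.mpr zero_le_one
  have hG : ∀ x ∈ Set.Ioo (0:ℝ) 1,
      HasDerivAt (fun u => ∫ t in (0:ℝ)..u, t * f t) (x * f x) x := by
    intro x hx
    have hxI : x ∈ Set.Icc (0:ℝ) 1 := Set.Ioo_subset_Icc_self hx
    exact intervalIntegral.integral_hasDerivAt_right (hgint 0 h0I x hxI)
      ⟨Set.Icc (0:ℝ) 1, Icc_mem_nhds hx.1 hx.2,
        hgcont.aestronglyMeasurable measurableSet_Icc⟩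
      (hgcont.continuousAt (Icc_mem_nhds hx.1 hx.2))
  -- pointwise membership facts on s
  have hmem : ∀ q ∈ s, Finv (F q - α) ∈ Set.Icc (0:ℝ) 1 ∧ qB q ∈ Set.Icc (0:ℝ) 1 := by
    intro q hq
    obtain ⟨hqI, hαF, hlt, hq1, hq2⟩ := hrange q hq
    have hpI : F q - α ∈ Set.Icc (0:ℝ) 1 := by
      constructor
      · linarith
      · have := (hFmap q hqI).2; linarith
    exact ⟨(hFinv _ hpI).2, ⟨le_trans hqI.1 hq1, hq2.le⟩⟩
  -- rewriting identities on s
  have hAeq : ∀ q ∈ s, (∫ μ in (Finv (F q - α))..q, μ * f μ)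
      = (∫ t in (0:ℝ)..q, t * f t) - ∫ t in (0:ℝ)..(Finv (F q - α)), t * f t := by
    intro q hq
    exact (intervalIntegral.integral_interval_sub_left
      (hgint 0 h0I q (hrange q hq).1) (hgint 0 h0I _ (hmem q hq).1)).symm
  have hBeq : ∀ q ∈ s, (∫ μ in (qB q)..1, μ * f μ)
      = (∫ t in (0:ℝ)..1, t * f t) - ∫ t in (0:ℝ)..(qB q), t * f t := by
    intro q hq
    exact (intervalIntegral.integral_interval_sub_left
      (hgint 0 h0I 1 h1I) (hgint 0 h0I _ (hmem q hq).2)).symm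
  -- main derivative claim
  have hmain : ∀ q ∈ s,
      HasDerivAt (fun q => (∫ μ in (Finv (F q - α))..q, μ * f μ)
          + ∫ μ in (qB q)..1, μ * f μ)
        (f q * (q - Finv (F q - α)) * (1 - qB q)) q := by
    intro q₀ hq₀
    obtain ⟨hqI, hαF, hlt, hqB1, hqB2⟩ := hrange q₀ hq₀
    have hq01 : q₀ ∈ Set.Ioo (0:ℝ) 1 := hssub hq₀
    have hsnhds : s ∈ 𝓝 q₀ := hs.mem_nhds hq₀
    -- α < F q₀
    have hαlt : α < F q₀ := by
      obtain ⟨ε, hε, hball⟩ := Metric.isOpen_iff.mp hs q₀ hq₀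
      have hq₁s : q₀ - ε/2 ∈ s := by
        apply hball
        rw [Metric.mem_ball, Real.dist_eq]
        rw [show q₀ - ε/2 - q₀ = -(ε/2) by ring, abs_neg, abs_of_pos (by linarith)]
        linarith
      have h1 := (hrange _ hq₁s).2.1
      have h2 : F (q₀ - ε/2) < F q₀ := hFmono (hrange _ hq₁s).1 hqI (by linarith)
      linarith
    have hp₀Ioo : F q₀ - α ∈ Set.Ioo (0:ℝ) 1 := by
      constructor
      · linarith
      · have : F q₀ < F 1 := hFmono hqI h1I hq01.2
        rw [hF1] at this
        linarith
    have hp₀I : F q₀ - α ∈ Set.Icc (0:ℝ) 1 := Set.Ioo_subset_Icc_self hp₀Ioo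
    have ha₀ := hFinv _ hp₀I
    set a₀ := Finv (F q₀ - α) with ha₀def
    have ha₀Ioo : a₀ ∈ Set.Ioo (0:ℝ) 1 := by
      constructor
      · rcases eq_or_lt_of_le ha₀.2.1 with h | h
        · exfalso
          have : F a₀ = 0 := by rw [← h, hF0]
          rw [ha₀.1] at this
          linarith [hp₀Ioo.1]
        · exact h
      · exact lt_trans hlt hq01.2
    -- derivative of Finv at F q₀ - α
    have hFinvAt : ContinuousAt Finv (F q₀ - α) :=
      hFinvCont.continuousAt (Icc_mem_nhds hp₀Ioo.1 hp₀Ioo.2)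
    have hFinvDer : HasDerivAt Finv (f a₀)⁻¹ (F q₀ - α) := by
      refine HasDerivAt.of_local_left_inverse hFinvAt (hFderiv a₀ ha₀.2)
        (ne_of_gt (hfpos a₀ ha₀.2)) ?_
      filter_upwards [Ioo_mem_nhds hp₀Ioo.1 hp₀Ioo.2] with x hx
      exact (hFinv x (Set.Ioo_subset_Icc_self hx)).1
    have hφ : HasDerivAt (fun q => Finv (F q - α)) ((f a₀)⁻¹ * f q₀) q₀ :=
      hFinvDer.comp q₀ ((hFderiv q₀ hqI).sub_const α)
    -- derivative of A
    have hGφ : HasDerivAt (fun q => ∫ t in (0:ℝ)..(Finv (F q - α)), t * f t)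
        ((a₀ * f a₀) * ((f a₀)⁻¹ * f q₀)) q₀ := by have := (hG a₀ ha₀Ioo).comp q₀ hφ; exact this
    have hA' : HasDerivAt (fun q => (∫ t in (0:ℝ)..q, t * f t)
          - ∫ t in (0:ℝ)..(Finv (F q - α)), t * f t)
        (f q₀ * (q₀ - a₀)) q₀ := by
      have h := (hG q₀ hq01).sub hGφ
      have hval : q₀ * f q₀ - (a₀ * f a₀) * ((f a₀)⁻¹ * f q₀) = f q₀ * (q₀ - a₀) := by
        have hne : f a₀ ≠ 0 := ne_of_gt (hfpos a₀ ha₀.2)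
        field_simp
      rwa [hval] at h
    have hA : HasDerivAt (fun q => ∫ μ in (Finv (F q - α))..q, μ * f μ)
        (f q₀ * (q₀ - a₀)) q₀ :=
      hA'.congr_of_eventuallyEq (Filter.eventuallyEq_of_mem hsnhds hAeq)
    -- derivative of B
    have hqBd : HasDerivAt qB (deriv qB q₀) q₀ :=
      (hqB.differentiableAt hsnhds).hasDerivAt
    have hqBIoo : qB q₀ ∈ Set.Ioo (0:ℝ) 1 := ⟨lt_of_lt_of_le hq01.1 hqB1, hqB2⟩
    have hGqB : HasDerivAt (fun q => ∫ t in (0:ℝ)..(qB q), t * f t)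
        ((qB q₀ * f (qB q₀)) * deriv qB q₀) q₀ := (hG (qB q₀) hqBIoo).comp q₀ hqBd
    have hB' : HasDerivAt (fun q => (∫ t in (0:ℝ)..1, t * f t)
          - ∫ t in (0:ℝ)..(qB q), t * f t)
        (-((qB q₀ * f (qB q₀)) * deriv qB q₀)) q₀ := hGqB.const_sub _
    have hB : HasDerivAt (fun q => ∫ μ in (qB q)..1, μ * f μ)
        (-((qB q₀ * f (qB q₀)) * deriv qB q₀)) q₀ :=
      hB'.congr_of_eventuallyEq (Filter.eventuallyEq_of_mem hsnhds hBeq)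
    -- constraint gives f (qB q₀) * qB' = f q₀ * (q₀ - a₀)
    have hFqB : HasDerivAt (fun q => F (qB q)) (f (qB q₀) * deriv qB q₀) q₀ :=
      (hFderiv (qB q₀) (Set.Ioo_subset_Icc_self hqBIoo)).comp q₀ hqBd
    have hC : HasDerivAt (fun q => (∫ μ in (Finv (F q - α))..q, μ * f μ) + 1 - F (qB q))
        (f q₀ * (q₀ - a₀) - f (qB q₀) * deriv qB q₀) q₀ := (hA.add_const 1).sub hFqB
    have hCconst : HasDerivAt (fun q => (∫ μ in (Finv (F q - α))..q, μ * f μ) + 1 - F (qB q))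
        (0 : ℝ) q₀ := by
      refine (hasDerivAt_const q₀ β).congr_of_eventuallyEq ?_
      exact Filter.eventuallyEq_of_mem hsnhds hcon
    have hkey : f (qB q₀) * deriv qB q₀ = f q₀ * (q₀ - a₀) := by
      have := hC.unique hCconst
      linarith
    have hval2 : f q₀ * (q₀ - a₀) + -((qB q₀ * f (qB q₀)) * deriv qB q₀)
        = f q₀ * (q₀ - a₀) * (1 - qB q₀) := by
      linear_combination (-(qB q₀)) * hkey
    have hfinal := hA.add hB
    rwa [hval2] at hfinal
  refine ⟨fun q hq => ⟨hmain q hq, ?_⟩, ?_⟩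
  · obtain ⟨hqI, hαF, hlt, hqB1, hqB2⟩ := hrange q hq
    have := hfpos q hqI
    have h1 : 0 < q - Finv (F q - α) := by linarith
    have h2 : 0 < 1 - qB q := by linarith
    positivity
  · refine strictMonoOn_of_deriv_pos hconv
      (fun q hq => (hmain q hq).continuousAt.continuousWithinAt) ?_
    intro q hq
    rw [hs.interior_eq] at hq
    rw [(hmain q hq).deriv]
    obtain ⟨hqI, hαF, hlt, hqB1, hqB2⟩ := hrange q hq
    have := hfpos q hqI
    have h1 : 0 < q - Finv (F q - α) := by linarith
    have h2 : 0 < 1 - qB q := by linarith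
    positivity
end

section
/- Let F be a continuous strictly increasing CDF on [0,1], β ∈ (0,1), α+β < 1, α > 0. Suppose [q_α, q_β] solves F(q_β) − F(q_α) = α and ∫_{q_α}^{q_β} μ dF + 1 − F(q_β) = β, and let q̃_β = F^{-1}(1−β) be the purely algorithmic allocation threshold. Then q_α < q̃_β < q_β. -/
/-- Screening at the margin of algorithmic allocation: the optimal screening band
`[q_α, q_β]` (of `F`-mass `α`, exhausting the allocation budget `β` together with
direct allocation above `q_β`) straddles the purely algorithmic threshold
`q̃_β = F⁻¹(1-β)`: `q_α < q̃_β < q_β`. -/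
theorem screening_band_straddles_threshold
    (S : StieltjesFunction ℝ) (α β qα qβ qt : ℝ)
    (hα : 0 < α) (hαβ : α < β) (hβ : β < 1) (hsum : α + β < 1)
    (hS0 : S 0 = 0) (hS1 : S 1 = 1) (hScont : Continuous S)
    (hSmono : StrictMonoOn S (Set.Icc (0:ℝ) 1))
    (hqα0 : 0 ≤ qα) (hband : qα ≤ qβ) (hqβ1 : qβ < 1)
    (hscreen : S qβ - S qα = α)
    (halloc : (∫ x in qα..qβ, x ∂S.measure) + 1 - S qβ = β)
    (hqt : S qt = 1 - β) (hqt01 : qt ∈ Set.Icc (0:ℝ) 1) :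
    qα < qt ∧ qt < qβ := by
  have hSlt : S qα < S qβ := by linarith
  have hqαβ : qα < qβ := by
    by_contra h
    push_neg at h
    exact absurd (S.mono h) (not_le.mpr hSlt)
  have hqβ0 : 0 < qβ := lt_of_le_of_lt hqα0 hqαβ
  set c : ℝ := (qα + qβ) / 2 with hc
  have hc0 : 0 < c := by positivity
  have hcα : qα < c := by simp only [hc]; linarith
  have hcβ : c < qβ := by simp only [hc]; linarith
  -- measures of the intervals
  have hμ : S.measure (Set.Ioc qα qβ) = ENNReal.ofReal α := by
    rw [S.measure_Ioc, hscreen]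
  have hμc : S.measure (Set.Ioc c qβ) = ENNReal.ofReal (S qβ - S c) := S.measure_Ioc c qβ
  have hSc : S c < S qβ := hSmono ⟨hc0.le, by linarith⟩ ⟨hqβ0.le, hqβ1.le⟩ hcβ
  -- integrability
  have hint : MeasureTheory.IntegrableOn id (Set.Ioc qα qβ) S.measure := by
    have h1 : MeasureTheory.IntegrableOn id (Set.Icc qα qβ) S.measure :=
      (continuous_id.continuousOn).integrableOn_Icc
    exact h1.mono_set Set.Ioc_subset_Icc_self
  have hintc : MeasureTheory.IntegrableOn id (Set.Ioc c qβ) S.measure :=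
    hint.mono_set (Set.Ioc_subset_Ioc_left hcα.le)
  set I : ℝ := ∫ x in Set.Ioc qα qβ, x ∂S.measure with hI
  -- upper bound I ≤ qβ * α
  have hup : I ≤ qβ * α := by
    have h1 : I ≤ ∫ _x in Set.Ioc qα qβ, qβ ∂S.measure := by
      refine MeasureTheory.setIntegral_mono_on hint
        ((MeasureTheory.integrableOn_const_iff enorm_ne_top).mpr (Or.inr ?_)) measurableSet_Ioc
        (fun x hx => hx.2)
      rw [hμ]; exact ENNReal.ofReal_lt_top
    rwa [MeasureTheory.setIntegral_const, MeasureTheory.measureReal_def, hμ, ENNReal.toReal_ofReal hα.le,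
      smul_eq_mul, mul_comm] at h1
  have hIα : I < α := lt_of_le_of_lt hup (by nlinarith)
  -- lower bound I > 0
  have hlow : 0 < I := by
    have h1 : (∫ _x in Set.Ioc c qβ, c ∂S.measure) ≤ ∫ x in Set.Ioc c qβ, x ∂S.measure := by
      refine MeasureTheory.setIntegral_mono_on
        ((MeasureTheory.integrableOn_const_iff enorm_ne_top).mpr (Or.inr ?_)) hintc measurableSet_Ioc
        (fun x hx => hx.1.le)
      rw [hμc]; exact ENNReal.ofReal_lt_top
    have h2 : (∫ x in Set.Ioc c qβ, x ∂S.measure) ≤ I := by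
      refine MeasureTheory.setIntegral_mono_set hint ?_
        (HasSubset.Subset.eventuallyLE (Set.Ioc_subset_Ioc_left hcα.le))
      filter_upwards [MeasureTheory.ae_restrict_mem measurableSet_Ioc] with x hx
      exact le_trans hqα0 hx.1.le
    have h3 : (∫ _x in Set.Ioc c qβ, c ∂S.measure) = (S qβ - S c) * c := by
      rw [MeasureTheory.setIntegral_const, MeasureTheory.measureReal_def, hμc,
        ENNReal.toReal_ofReal (by linarith), smul_eq_mul]
    nlinarith
  -- rewrite halloc
  have hII : (∫ x in qα..qβ, x ∂S.measure) = I := by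
    rw [hI, intervalIntegral.integral_of_le hband]
  rw [hII] at halloc
  have hSqβ : S qβ = 1 - β + I := by linarith
  have hSqα : S qα = 1 - β + I - α := by linarith
  have hqβmem : qβ ∈ Set.Icc (0:ℝ) 1 := ⟨hqβ0.le, hqβ1.le⟩
  have hqαmem : qα ∈ Set.Icc (0:ℝ) 1 := ⟨hqα0, by linarith⟩
  constructor
  · have : S qα < S qt := by rw [hSqα, hqt]; linarith
    exact (hSmono.lt_iff_lt hqαmem hqt01).mp this
  · have : S qt < S qβ := by rw [hSqβ, hqt]; linarith
    exact (hSmono.lt_iff_lt hqt01 hqβmem).mp this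
end

section
/- Let F be a continuous strictly increasing CDF on [0,1] with density f > 0, let α ∈ (0,β), β ∈ (0,1), α+β < 1. Then there exists a pair (q_α, q_β) with 0 < q_α ≤ q_β < 1 satisfying F(q_β) − F(q_α) = α and ∫_{q_α}^{q_β} μ dF(μ) + 1 − F(q_β) = β, and this pair is unique. -/
open Set intervalIntegral MeasureTheory

/-- Extension of `F` to all of ℝ. -/
noncomputable def screenExt (F : ℝ → ℝ) (x : ℝ) : ℝ :=
  F (min 1 (max 0 x)) + min x 0 + max (x - 1) 0

lemma screenExt_eq (F : ℝ → ℝ) {x : ℝ} (hx : x ∈ Set.Icc (0:ℝ) 1) :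
    screenExt F x = F x := by
  rcases hx with ⟨h0, h1⟩
  have hc : (1:ℝ) ⊓ (0 ⊔ x) = x := by rw [max_eq_right h0, min_eq_right h1]
  simp [screenExt, hc, min_eq_right h0, max_eq_right (by linarith : x - 1 ≤ 0)]

lemma screenExt_strictMono {F : ℝ → ℝ} (hF : StrictMonoOn F (Set.Icc (0:ℝ) 1)) :
    StrictMono (screenExt F) := by
  have hclamp : ∀ x : ℝ, min 1 (max 0 x) ∈ Set.Icc (0:ℝ) 1 :=
    fun x => ⟨le_min zero_le_one (le_max_left 0 x), min_le_left _ _⟩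
  have hA : ∀ u v : ℝ, u ≤ v → F (min 1 (max 0 u)) ≤ F (min 1 (max 0 v)) := by
    intro u v huv
    have h : min 1 (max 0 u) ≤ min 1 (max 0 v) :=
      min_le_min le_rfl (max_le_max le_rfl huv)
    rcases eq_or_lt_of_le h with h' | h'
    · rw [h']
    · exact (hF (hclamp u) (hclamp v) h').le
  intro x y hxy
  unfold screenExt
  rcases le_or_gt y 0 with hy0 | hy0
  · have hBx : min x 0 = x := min_eq_left (by linarith)
    have hBy : min y 0 = y := min_eq_left hy0
    have := hA x y hxy.le
    have hC : max (x - 1) 0 ≤ max (y - 1) 0 := max_le_max (by linarith) le_rfl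
    rw [hBx, hBy]; linarith
  · rcases le_or_gt 1 x with hx1 | hx1
    · have hCx : max (x - 1) 0 = x - 1 := max_eq_left (by linarith)
      have hCy : max (y - 1) 0 = y - 1 := max_eq_left (by linarith)
      have := hA x y hxy.le
      have hB : min x 0 ≤ min y 0 := min_le_min hxy.le le_rfl
      rw [hCx, hCy]; linarith
    · -- x < 1 and 0 < y : the F-term strictly increases
      have hcx : min 1 (max 0 x) < min 1 (max 0 y) := by
        rcases le_or_gt x 0 with hx0 | hx0
        · have : max 0 x = 0 := max_eq_left hx0
          rw [this, min_eq_right zero_le_one]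
          exact lt_min one_pos (lt_max_of_lt_right hy0)
        · have hx' : max 0 x = x := max_eq_right hx0.le
          have hy' : max 0 y = y := max_eq_right hy0.le
          rw [hx', hy']
          rw [min_eq_right hx1.le]
          exact lt_min hx1 hxy
      have hstr := hF (hclamp x) (hclamp y) hcx
      have hB : min x 0 ≤ min y 0 := min_le_min hxy.le le_rfl
      have hC : max (x - 1) 0 ≤ max (y - 1) 0 := max_le_max (by linarith) le_rfl
      linarith

lemma screenExt_continuous {F : ℝ → ℝ} (hF : ContinuousOn F (Set.Icc (0:ℝ) 1)) :
    Continuous (screenExt F) := by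
  have hclamp : Continuous fun x : ℝ => min 1 (max 0 x) :=
    continuous_const.min (continuous_const.max continuous_id)
  have hmaps : ∀ x : ℝ, min 1 (max 0 x) ∈ Set.Icc (0:ℝ) 1 :=
    fun x => ⟨le_min zero_le_one (le_max_left 0 x), min_le_left _ _⟩
  have hA : Continuous fun x : ℝ => F (min 1 (max 0 x)) :=
    hF.comp_continuous hclamp hmaps
  exact (hA.add (continuous_id.min continuous_const)).add
    ((continuous_id.sub continuous_const).max continuous_const)

lemma screenExt_surjective {F : ℝ → ℝ} (hF : ContinuousOn F (Set.Icc (0:ℝ) 1))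
    (hmono : ∀ u v : ℝ, u ∈ Set.Icc (0:ℝ) 1 → v ∈ Set.Icc (0:ℝ) 1 → u ≤ v → F u ≤ F v)
    (hF0 : F 0 = 0) (hF1 : F 1 = 1) :
    Function.Surjective (screenExt F) := by
  have hclamp : ∀ x : ℝ, min 1 (max 0 x) ∈ Set.Icc (0:ℝ) 1 :=
    fun x => ⟨le_min zero_le_one (le_max_left 0 x), min_le_left _ _⟩
  have hub : ∀ x : ℝ, F (min 1 (max 0 x)) ≤ 1 := by
    intro x
    have := hmono _ 1 (hclamp x) (by norm_num) (hclamp x).2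
    linarith [hF1]
  have hlb : ∀ x : ℝ, 0 ≤ F (min 1 (max 0 x)) := by
    intro x
    have := hmono 0 _ (by norm_num) (hclamp x) (hclamp x).1
    linarith [hF0]
  apply Continuous.surjective (screenExt_continuous hF)
  · apply Filter.tendsto_atTop_mono' _ _ (Filter.tendsto_atTop_add_const_right _ (-1) Filter.tendsto_id)
    filter_upwards [Filter.eventually_ge_atTop (0:ℝ)] with x hx
    have h1 : min x 0 = 0 := min_eq_right hx
    have h2 : x - 1 ≤ max (x - 1) 0 := le_max_left _ _
    have := hlb x
    simp only [screenExt, id_eq]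
    linarith
  · apply Filter.tendsto_atBot_mono' _ _ (Filter.tendsto_atBot_add_const_right _ (1:ℝ) Filter.tendsto_id)
    filter_upwards [Filter.eventually_le_atBot (1:ℝ)] with x hx
    have h1 : min x 0 ≤ x := min_le_left _ _
    have h2 : max (x - 1) 0 = 0 := max_eq_right (by linarith)
    have := hub x
    simp only [screenExt, id_eq]
    linarith



/-- Existence and uniqueness of the optimal screening band: for a continuous strictly
increasing CDF `F` on `[0,1]` with density `f > 0` and budgets `0 < α < β < 1` with
`α + β < 1`, there is a unique pair `0 < q_α ≤ q_β < 1` with `F(q_β) - F(q_α) = α`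
and `∫_{q_α}^{q_β} μ dF + 1 - F(q_β) = β`. -/
theorem screening_band_exists_unique
    (F f : ℝ → ℝ) (α β : ℝ)
    (hα : 0 < α) (hαβ : α < β) (hβ : β < 1) (hsum : α + β < 1)
    (hFderiv : ∀ x ∈ Set.Icc (0:ℝ) 1, HasDerivAt F (f x) x)
    (hfcont : ContinuousOn f (Set.Icc (0:ℝ) 1))
    (hfpos : ∀ x ∈ Set.Icc (0:ℝ) 1, 0 < f x)
    (hF0 : F 0 = 0) (hF1 : F 1 = 1) :
    ∃! p : ℝ × ℝ,
      0 < p.1 ∧ p.1 ≤ p.2 ∧ p.2 < 1 ∧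
      F p.2 - F p.1 = α ∧
      (∫ μ in p.1..p.2, μ * f μ) + 1 - F p.2 = β := by
  classical
  have hFcont : ContinuousOn F (Set.Icc 0 1) :=
    fun x hx => (hFderiv x hx).continuousAt.continuousWithinAt
  have hFmono : StrictMonoOn F (Set.Icc 0 1) := by
    apply strictMonoOn_of_deriv_pos (convex_Icc 0 1) hFcont
    intro x hx
    have hx' : x ∈ Set.Icc (0:ℝ) 1 := interior_subset hx
    rw [(hFderiv x hx').deriv]
    exact hfpos x hx'
  set Fe := screenExt F with hFe
  have hFeEq : ∀ {x : ℝ}, x ∈ Set.Icc (0:ℝ) 1 → Fe x = F x := fun hx => screenExt_eq F hx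
  have hFeM : StrictMono Fe := screenExt_strictMono hFmono
  have hFeC : Continuous Fe := screenExt_continuous hFcont
  have hFeS : Function.Surjective Fe :=
    screenExt_surjective hFcont (fun u v hu hv huv => hFmono.monotoneOn hu hv huv) hF0 hF1
  set e := StrictMono.orderIsoOfSurjective Fe hFeM hFeS with he
  set g : ℝ → ℝ := fun y => e.symm y with hg
  have hgFe : ∀ x, g (Fe x) = x := fun x => e.symm_apply_apply x
  have hFeg : ∀ y, Fe (g y) = y := fun y => e.apply_symm_apply y
  have hgM : StrictMono g := e.symm.strictMono
  have hgC : Continuous g := e.symm.continuous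
  have hFe0 : Fe 0 = 0 := by rw [hFeEq (by norm_num : (0:ℝ) ∈ Set.Icc (0:ℝ) 1), hF0]
  have hFe1 : Fe 1 = 1 := by rw [hFeEq (by norm_num : (1:ℝ) ∈ Set.Icc (0:ℝ) 1), hF1]
  have hg0 : g 0 = 0 := by conv_lhs => rw [← hFe0, hgFe]
  have hg1 : g 1 = 1 := by conv_lhs => rw [← hFe1, hgFe]
  have hgmem : ∀ {y : ℝ}, y ∈ Set.Icc (0:ℝ) 1 → g y ∈ Set.Icc (0:ℝ) 1 := by
    intro y hy
    constructor
    · rw [← hg0]; exact hgM.monotone hy.1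
    · rw [← hg1]; exact hgM.monotone hy.2
  -- integrability basics
  set w : ℝ → ℝ := fun t => t * f t with hw
  have hwc : ContinuousOn w (Set.Icc 0 1) := continuousOn_id.mul hfcont
  have hwint : MeasureTheory.IntegrableOn w (Set.Icc 0 1) := hwc.integrableOn_Icc
  have hfint : MeasureTheory.IntegrableOn f (Set.Icc 0 1) := hfcont.integrableOn_Icc
  have huIcc : ∀ {u v : ℝ}, u ∈ Set.Icc (0:ℝ) 1 → v ∈ Set.Icc (0:ℝ) 1 →
      Set.uIcc u v ⊆ Set.Icc (0:ℝ) 1 := fun hu hv => Set.uIcc_subset_Icc hu hv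
  have hII : ∀ (φ : ℝ → ℝ), MeasureTheory.IntegrableOn φ (Set.Icc 0 1) →
      ∀ {u v : ℝ}, u ∈ Set.Icc (0:ℝ) 1 → v ∈ Set.Icc (0:ℝ) 1 →
      IntervalIntegrable φ MeasureTheory.volume u v := by
    intro φ hφ u v hu hv
    exact (hφ.mono_set (huIcc hu hv)).intervalIntegrable
  set W : ℝ → ℝ := fun x => ∫ t in (0:ℝ)..x, w t with hW
  have hWc : ContinuousOn W (Set.Icc 0 1) := by
    have h01 : Set.uIcc (0:ℝ) 1 = Set.Icc (0:ℝ) 1 := Set.uIcc_of_le zero_le_one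
    have := intervalIntegral.continuousOn_primitive_interval
      (f := w) (μ := MeasureTheory.volume) (a := 0) (b := 1) (by rwa [h01])
    rwa [h01] at this
  have hWsub : ∀ {u v : ℝ}, u ∈ Set.Icc (0:ℝ) 1 → v ∈ Set.Icc (0:ℝ) 1 →
      (∫ t in u..v, w t) = W v - W u := by
    intro u v hu hv
    have h0 : (0:ℝ) ∈ Set.Icc (0:ℝ) 1 := by norm_num
    exact (intervalIntegral.integral_interval_sub_left (hII w hwint h0 hv) (hII w hwint h0 hu)).symm
  have hFTC : ∀ {u v : ℝ}, u ∈ Set.Icc (0:ℝ) 1 → v ∈ Set.Icc (0:ℝ) 1 →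
      (∫ t in u..v, f t) = F v - F u := by
    intro u v hu hv
    exact intervalIntegral.integral_eq_sub_of_hasDerivAt
      (fun x hx => hFderiv x (huIcc hu hv hx)) (hII f hfint hu hv)
  -- the screening function h
  set c : ℝ := g α with hc
  have hα1 : α ∈ Set.Icc (0:ℝ) 1 := ⟨hα.le, by linarith⟩
  have hcmem : c ∈ Set.Icc (0:ℝ) 1 := hgmem hα1
  have hc0 : 0 < c := by rw [hc, ← hg0]; exact hgM hα
  have hFec : Fe c = α := hFeg α
  set h : ℝ → ℝ := fun b => W b - W (g (Fe b - α)) + 1 - Fe b with hh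
  have hsub1 : Set.Icc c 1 ⊆ Set.Icc (0:ℝ) 1 := Set.Icc_subset_Icc hcmem.1 le_rfl
  have hFebmem : ∀ {b : ℝ}, b ∈ Set.Icc c 1 → Fe b - α ∈ Set.Icc (0:ℝ) 1 := by
    intro b hb
    constructor
    · have := hFeM.monotone hb.1; rw [hFec] at this; linarith
    · have := hFeM.monotone hb.2; rw [hFe1] at this; linarith
  have hgmem2 : ∀ {b : ℝ}, b ∈ Set.Icc c 1 → g (Fe b - α) ∈ Set.Icc (0:ℝ) 1 :=
    fun hb => hgmem (hFebmem hb)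
  have hhcont : ContinuousOn h (Set.Icc c 1) := by
    apply ContinuousOn.sub _ (hFeC.continuousOn)
    apply ContinuousOn.add _ continuousOn_const
    apply ContinuousOn.sub (hWc.mono hsub1)
    exact hWc.comp ((hgC.comp (hFeC.sub continuous_const)).continuousOn)
      (fun b hb => hgmem2 hb)
  have hWcval : 0 ≤ W c := by
    apply intervalIntegral.integral_nonneg hc0.le
    intro u hu
    exact mul_nonneg hu.1 (hfpos u ⟨hu.1, hu.2.trans hcmem.2⟩).le
  have hhc : β < h c := by
    have h1 : Fe c - α = 0 := by rw [hFec]; ring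
    have : h c = W c + 1 - α := by
      rw [hh]; simp only [hFec, sub_self, hg0]
      have hW0 : W 0 = 0 := intervalIntegral.integral_same
      rw [hW0]; ring
    rw [this]; linarith
  have hh1 : h 1 ≤ α := by
    set a1 : ℝ := g (1 - α) with ha1
    have h1α : (1:ℝ) - α ∈ Set.Icc (0:ℝ) 1 := ⟨by linarith, by linarith⟩
    have ha1mem : a1 ∈ Set.Icc (0:ℝ) 1 := hgmem h1α
    have hFea1 : F a1 = 1 - α := by rw [← hFeEq ha1mem, ha1, hFeg]
    have h1mem : (1:ℝ) ∈ Set.Icc (0:ℝ) 1 := by norm_num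
    have hval : h 1 = ∫ t in a1..1, w t := by
      rw [hh]; simp only [hFe1]
      rw [hWsub ha1mem h1mem]; ring_nf
      rfl
    rw [hval]
    have hmono : (∫ t in a1..1, w t) ≤ ∫ t in a1..1, f t := by
      apply intervalIntegral.integral_mono_on ha1mem.2 (hII w hwint ha1mem h1mem)
        (hII f hfint ha1mem h1mem)
      intro x hx
      have hx' : x ∈ Set.Icc (0:ℝ) 1 := ⟨ha1mem.1.trans hx.1, hx.2⟩
      have hf0 := (hfpos x hx').le
      show x * f x ≤ f x
      nlinarith [hx.2]
    have := hFTC ha1mem h1mem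
    rw [this, hF1, hFea1] at hmono
    linarith
  -- IVT
  have hivt := intermediate_value_Icc' hcmem.2 hhcont
  have hβmem : β ∈ Set.Icc (h 1) (h c) := ⟨by linarith, by linarith⟩
  obtain ⟨b, hbmem, hbval⟩ := hivt hβmem
  have hbc : c < b := by
    rcases eq_or_lt_of_le hbmem.1 with h' | h'
    · exfalso; rw [h', hbval] at hhc; exact lt_irrefl _ hhc
    · exact h'
  have hb1 : b < 1 := by
    rcases eq_or_lt_of_le hbmem.2 with h' | h'
    · exfalso; rw [h'] at hbval; linarith
    · exact h'
  have hbmem01 : b ∈ Set.Icc (0:ℝ) 1 := hsub1 hbmem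
  have hFebL : α < Fe b := by have := hFeM hbc; rwa [hFec] at this
  have hFebU : Fe b < 1 := by have := hFeM hb1; rwa [hFe1] at this
  set a : ℝ := g (Fe b - α) with ha
  have hamem : a ∈ Set.Icc (0:ℝ) 1 := hgmem ⟨by linarith, by linarith⟩
  have hFea : Fe a = Fe b - α := hFeg _
  have ha0 : 0 < a := by
    rw [ha, ← hg0]
    exact hgM (by linarith)
  have hab : a < b := by
    have : Fe a < Fe b := by rw [hFea]; linarith
    exact hFeM.lt_iff_lt.mp this
  have hFab : F b - F a = α := by
    rw [← hFeEq hbmem01, ← hFeEq hamem, hFea]; ring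
  have hbint : (∫ μ in a..b, μ * f μ) + 1 - F b = β := by
    have : (∫ μ in a..b, μ * f μ) = W b - W a := hWsub hamem hbmem01
    rw [this, ← hFeEq hbmem01]
    rw [hh] at hbval
    exact hbval
  -- uniqueness core: no two solutions can have distinct right endpoints
  have keylt : ∀ a₁ b₁ a₂ b₂ : ℝ,
      (0 < a₁ ∧ a₁ ≤ b₁ ∧ b₁ < 1 ∧ F b₁ - F a₁ = α ∧
        (∫ μ in a₁..b₁, μ * f μ) + 1 - F b₁ = β) →
      (0 < a₂ ∧ a₂ ≤ b₂ ∧ b₂ < 1 ∧ F b₂ - F a₂ = α ∧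
        (∫ μ in a₂..b₂, μ * f μ) + 1 - F b₂ = β) →
      ¬ b₁ < b₂ := by
    rintro a₁ b₁ a₂ b₂ ⟨ha₁, hab₁, hb₁, hα₁, hβ₁⟩ ⟨ha₂, hab₂, hb₂, hα₂, hβ₂⟩ hlt
    have ha₁m : a₁ ∈ Set.Icc (0:ℝ) 1 := ⟨ha₁.le, by linarith⟩
    have hb₁m : b₁ ∈ Set.Icc (0:ℝ) 1 := ⟨by linarith, hb₁.le⟩
    have ha₂m : a₂ ∈ Set.Icc (0:ℝ) 1 := ⟨ha₂.le, by linarith⟩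
    have hb₂m : b₂ ∈ Set.Icc (0:ℝ) 1 := ⟨by linarith, hb₂.le⟩
    have hFb : F b₁ < F b₂ := hFmono hb₁m hb₂m hlt
    have hFa : F a₁ < F a₂ := by linarith
    have haa : a₁ < a₂ := by
      by_contra hcon
      push_neg at hcon
      have := hFmono.monotoneOn ha₂m ha₁m hcon
      linarith
    -- integral bookkeeping
    have hI1 : (∫ t in a₁..b₁, w t) + ∫ t in b₁..b₂, w t = ∫ t in a₁..b₂, w t :=
      intervalIntegral.integral_add_adjacent_intervals
        (hII w hwint ha₁m hb₁m) (hII w hwint hb₁m hb₂m)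
    have hI2 : (∫ t in a₁..a₂, w t) + ∫ t in a₂..b₂, w t = ∫ t in a₁..b₂, w t :=
      intervalIntegral.integral_add_adjacent_intervals
        (hII w hwint ha₁m ha₂m) (hII w hwint ha₂m hb₂m)
    have hFTCb : (∫ t in b₁..b₂, f t) = F b₂ - F b₁ := hFTC hb₁m hb₂m
    have hpos : 0 < ∫ t in b₁..b₂, (1 - t) * f t := by
      apply intervalIntegral.intervalIntegral_pos_of_pos_on
      · exact hII (fun t => (1 - t) * f t)
          (((continuousOn_const.sub continuousOn_id).mul hfcont).integrableOn_Icc) hb₁m hb₂m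
      · intro x hx
        have hx' : x ∈ Set.Icc (0:ℝ) 1 := ⟨by linarith [hx.1, hb₁m.1], by linarith [hx.2]⟩
        have := hfpos x hx'
        have : (0:ℝ) < 1 - x := by linarith [hx.2]
        exact mul_pos this (hfpos x hx')
      · exact hlt
    have hnn : 0 ≤ ∫ t in a₁..a₂, w t := by
      apply intervalIntegral.integral_nonneg haa.le
      intro u hu
      exact mul_nonneg (ha₁.le.trans hu.1) (hfpos u ⟨ha₁.le.trans hu.1, hu.2.trans ha₂m.2⟩).le
    have hsplit : (∫ t in b₁..b₂, (1 - t) * f t)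
        = (∫ t in b₁..b₂, f t) - ∫ t in b₁..b₂, w t := by
      rw [← intervalIntegral.integral_sub (hII f hfint hb₁m hb₂m) (hII w hwint hb₁m hb₂m)]
      congr 1
      ext t
      rw [hw]; ring
    rw [hsplit, hFTCb] at hpos
    linarith
  -- conclusion
  refine ⟨(a, b), ⟨ha0, hab.le, hb1, hFab, hbint⟩, ?_⟩
  rintro ⟨a₂, b₂⟩ ⟨hqa, hqab, hqb, hqα, hqβ⟩
  have hP1 : (0 < a₂ ∧ a₂ ≤ b₂ ∧ b₂ < 1 ∧ F b₂ - F a₂ = α ∧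
      (∫ μ in a₂..b₂, μ * f μ) + 1 - F b₂ = β) := ⟨hqa, hqab, hqb, hqα, hqβ⟩
  have hP2 : (0 < a ∧ a ≤ b ∧ b < 1 ∧ F b - F a = α ∧
      (∫ μ in a..b, μ * f μ) + 1 - F b = β) := ⟨ha0, hab.le, hb1, hFab, hbint⟩
  have hbb : b₂ = b := by
    rcases lt_trichotomy b₂ b with h' | h' | h'
    · exact absurd h' (keylt a₂ b₂ a b hP1 hP2)
    · exact h'
    · exact absurd h' (keylt a b a₂ b₂ hP2 hP1)
  have haa : a₂ = a := by
    have hFaa : F a₂ = F a := by rw [hbb] at hqα; linarith [hFab]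
    have ha₂m : a₂ ∈ Set.Icc (0:ℝ) 1 := ⟨hqa.le, by linarith⟩
    exact hFmono.injOn ha₂m hamem hFaa
  exact Prod.ext haa hbb
end

section
/- Let F be a continuous strictly increasing CDF on [0,1] and let (q_α, q_β) solve F(q_β) − F(q_α) = α and ∫_{q_α}^{q_β} μ dF + 1 − F(q_β) = β with α ∈ (0,β), α+β < 1. Then the two-stage value V*(α) = ∫_{q_α}^1 μ dF(μ) satisfies V*(α) ≥ ∫_{F^{-1}(1−β)}^1 μ dF(μ) = V*(0), with strict inequality whenever F assigns positive mass to risk scores strictly between 0 and 1 within the band. -/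
/-- The value of screening: the optimal two-stage value `V*(α) = ∫_{q_α}^1 μ dF`
dominates the purely algorithmic value `V*(0) = ∫_{F⁻¹(1-β)}^1 μ dF`, with strict
inequality whenever the screening band carries positive `F`-mass of risk scores
strictly between 0 and 1. -/
theorem screening_improves_value
    (F f : ℝ → ℝ) (α β qα qβ qt : ℝ)
    (hα : 0 < α) (hαβ : α < β) (hβ : β < 1) (hsum : α + β < 1)
    (hFderiv : ∀ x ∈ Set.Icc (0:ℝ) 1, HasDerivAt F (f x) x)
    (hfpos : ∀ x ∈ Set.Icc (0:ℝ) 1, 0 < f x)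
    (hF0 : F 0 = 0) (hF1 : F 1 = 1)
    (hqα0 : 0 ≤ qα) (hband : qα ≤ qβ) (hqβ1 : qβ ≤ 1)
    (hscreen : F qβ - F qα = α)
    (halloc : (∫ μ in qα..qβ, μ * f μ) + 1 - F qβ = β)
    (hqt : F qt = 1 - β) (hqt01 : qt ∈ Set.Icc (0:ℝ) 1) :
    ((∫ μ in qt..1, μ * f μ) ≤ ∫ μ in qα..1, μ * f μ) ∧
    (0 < ∫ μ in (max qα 0)..(min qβ 1), f μ →
      (∫ μ in qt..1, μ * f μ) < ∫ μ in qα..1, μ * f μ) := by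
  have hFc : ContinuousOn F (Set.Icc (0:ℝ) 1) :=
    fun x hx => (hFderiv x hx).continuousAt.continuousWithinAt
  have hfint : MeasureTheory.IntegrableOn f (Set.Ioc (0:ℝ) 1) :=
    intervalIntegral.integrableOn_deriv_of_nonneg hFc
      (fun x hx => hFderiv x (Set.Ioo_subset_Icc_self hx))
      (fun x hx => (hfpos x (Set.Ioo_subset_Icc_self hx)).le)
  -- integrability of μ * f μ on (0,1]
  have hgint : MeasureTheory.IntegrableOn (fun μ => μ * f μ) (Set.Ioc (0:ℝ) 1) := by
    apply MeasureTheory.Integrable.mono hfint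
      (aestronglyMeasurable_id.mul hfint.aestronglyMeasurable)
    refine (MeasureTheory.ae_restrict_iff' measurableSet_Ioc).2 ?_
    filter_upwards with x hx
    have h0 : 0 < x := hx.1
    have h1 : x ≤ 1 := hx.2
    simp only [Pi.mul_apply, id_eq, Real.norm_eq_abs, abs_mul]
    rw [abs_of_pos h0]
    nlinarith [abs_nonneg (f x)]
  have hfi : ∀ a b : ℝ, 0 ≤ a → a ≤ b → b ≤ 1 → IntervalIntegrable f MeasureTheory.volume a b := by
    intro a b ha hab hb
    rw [intervalIntegrable_iff_integrableOn_Ioc_of_le hab]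
    exact hfint.mono_set (Set.Ioc_subset_Ioc ha hb)
  have hgi : ∀ a b : ℝ, 0 ≤ a → a ≤ b → b ≤ 1 →
      IntervalIntegrable (fun μ => μ * f μ) MeasureTheory.volume a b := by
    intro a b ha hab hb
    rw [intervalIntegrable_iff_integrableOn_Ioc_of_le hab]
    exact hgint.mono_set (Set.Ioc_subset_Ioc ha hb)
  -- FTC on subintervals of [0,1]
  have hFTC : ∀ a b : ℝ, 0 ≤ a → a ≤ b → b ≤ 1 → (∫ x in a..b, f x) = F b - F a := by
    intro a b ha hab hb
    apply intervalIntegral.integral_eq_sub_of_hasDerivAt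
    · intro x hx
      rw [Set.uIcc_of_le hab] at hx
      exact hFderiv x ⟨ha.trans hx.1, hx.2.trans hb⟩
    · exact hfi a b ha hab hb
  -- F is strictly increasing on [0,1]
  have hmono : ∀ a b : ℝ, 0 ≤ a → a < b → b ≤ 1 → F a < F b := by
    intro a b ha hab hb
    have h := hFTC a b ha hab.le hb
    have hpos : 0 < ∫ x in a..b, f x := by
      apply intervalIntegral.intervalIntegral_pos_of_pos_on (hfi a b ha hab.le hb) _ hab
      intro x hx
      exact hfpos x ⟨ha.trans hx.1.le, hx.2.le.trans hb⟩
    linarith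
  have hqα1 : qα ≤ 1 := hband.trans hqβ1
  have hqt0 : 0 ≤ qt := hqt01.1
  have hqt1 : qt ≤ 1 := hqt01.2
  -- qα < qβ
  have hqαβ : qα < qβ := by
    rcases lt_or_eq_of_le hband with h | h
    · exact h
    · exfalso; rw [h] at hscreen; simp at hscreen; linarith
  -- I < α
  have hIband := hfi qα qβ hqα0 hband hqβ1
  have hgband := hgi qα qβ hqα0 hband hqβ1
  have hIlt : (∫ μ in qα..qβ, μ * f μ) < α := by
    have hsub : (∫ μ in qα..qβ, (f μ - μ * f μ)) =
        (∫ μ in qα..qβ, f μ) - ∫ μ in qα..qβ, μ * f μ :=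
      intervalIntegral.integral_sub hIband hgband
    have hpos : 0 < ∫ μ in qα..qβ, (f μ - μ * f μ) := by
      apply intervalIntegral.intervalIntegral_pos_of_pos_on (hIband.sub hgband) _ hqαβ
      intro x hx
      have hx0 : 0 ≤ x := hqα0.trans hx.1.le
      have hx1 : x < 1 := hx.2.trans_le hqβ1
      have hf := hfpos x ⟨hx0, hx1.le⟩
      nlinarith
    have := hFTC qα qβ hqα0 hband hqβ1
    rw [hsub, this, hscreen] at hpos
    linarith
  -- F qα < F qt, hence qα < qt
  have hFqβ : F qβ = (∫ μ in qα..qβ, μ * f μ) + 1 - β := by linarith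
  have hFlt : F qα < F qt := by rw [hqt]; linarith
  have hqαt : qα < qt := by
    by_contra h
    push_neg at h
    rcases lt_or_eq_of_le h with h' | h'
    · exact absurd (hmono qt qα hqt0 h' hqα1) (by linarith)
    · rw [h'] at hFlt; linarith
  -- split the integral
  have hsplit : (∫ μ in qα..qt, μ * f μ) + (∫ μ in qt..1, μ * f μ) = ∫ μ in qα..1, μ * f μ :=
    intervalIntegral.integral_add_adjacent_intervals (hgi qα qt hqα0 hqαt.le hqt1)
      (hgi qt 1 hqt0 hqt1 le_rfl)
  have hmid : 0 < ∫ μ in qα..qt, μ * f μ := by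
    apply intervalIntegral.intervalIntegral_pos_of_pos_on (hgi qα qt hqα0 hqαt.le hqt1) _ hqαt
    intro x hx
    have hx0 : 0 < x := hqα0.trans_lt hx.1
    have hx1 : x < 1 := hx.2.trans_le hqt1
    exact mul_pos hx0 (hfpos x ⟨hx0.le, hx1.le⟩)
  have hstrict : (∫ μ in qt..1, μ * f μ) < ∫ μ in qα..1, μ * f μ := by linarith
  exact ⟨hstrict.le, fun _ => hstrict⟩
end
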